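/- arXiv:1908.10935 — 6 statements merged into one kernel-verified Lean document; each statement's English description precedes it below -/
import Mathlib

section
/- For all real x and y, the supremum over θ ∈ ℝ of |x·tanh(xθ) − y·tanh(yθ)|/|θ| equals |x² − y²|. -/
private lemma hd_tanh (x : ℝ) : HasDerivAt Real.tanh (1 / Real.cosh x ^ 2) x := by
  have h := (Real.hasDerivAt_sinh x).div (Real.hasDerivAt_cosh x) (Real.cosh_pos x).ne'
  have hfun : (Real.sinh / Real.cosh) = Real.tanh := by
    funext t; rw [Pi.div_apply, Real.tanh_eq_sinh_div_cosh]
  rw [hfun] at h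
  refine h.congr_deriv ?_
  have := Real.cosh_sq_sub_sinh_sq x
  rw [← this]
  ring

private lemma tanh_sm : StrictMono Real.tanh := by
  apply strictMono_of_deriv_pos
  intro t
  rw [(hd_tanh t).deriv]
  positivity

private lemma tanh_nonneg' {t : ℝ} (h : 0 ≤ t) : 0 ≤ Real.tanh t := by
  have := tanh_sm.monotone h
  simpa [Real.tanh_zero] using this

private lemma abs_tanh (t : ℝ) : |Real.tanh t| = Real.tanh |t| := by
  rcases le_total 0 t with h | h
  · rw [abs_of_nonneg h, abs_of_nonneg (tanh_nonneg' h)]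
  · have h1 : Real.tanh t ≤ 0 := by
      have := tanh_sm.monotone h
      simpa [Real.tanh_zero] using this
    rw [abs_of_nonpos h, abs_of_nonpos h1, Real.tanh_neg]

private lemma sq_tanh_le {s t : ℝ} (h : |s| ≤ |t|) : Real.tanh s ^ 2 ≤ Real.tanh t ^ 2 := by
  rw [← sq_abs (Real.tanh s), ← sq_abs (Real.tanh t), abs_tanh, abs_tanh]
  have h1 := tanh_nonneg' (abs_nonneg s)
  have h2 := tanh_sm.monotone h
  nlinarith

private lemma one_div_cosh_sq (s : ℝ) : 1 / Real.cosh s ^ 2 = 1 - Real.tanh s ^ 2 := by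
  have hc := Real.cosh_pos s
  have := Real.cosh_sq_sub_sinh_sq s
  rw [Real.tanh_eq_sinh_div_cosh]
  field_simp
  linarith

private lemma core_mono {a b : ℝ} (hb : 0 ≤ b) (hba : b ≤ a) :
    Monotone (fun t => (a ^ 2 - b ^ 2) * t -
      (a * Real.tanh (a * t) - b * Real.tanh (b * t))) := by
  have hg : ∀ t : ℝ, HasDerivAt
      (fun t => (a ^ 2 - b ^ 2) * t - (a * Real.tanh (a * t) - b * Real.tanh (b * t)))
      ((a ^ 2 - b ^ 2) - (a * ((1 / Real.cosh (a * t) ^ 2) * a)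
        - b * ((1 / Real.cosh (b * t) ^ 2) * b))) t := by
    intro t
    have h1 : HasDerivAt (fun t : ℝ => Real.tanh (a * t)) ((1 / Real.cosh (a * t) ^ 2) * a) t := by
      have := (hd_tanh (a * t)).comp t ((hasDerivAt_id t).const_mul a)
      simpa [Function.comp_def] using this
    have h2 : HasDerivAt (fun t : ℝ => Real.tanh (b * t)) ((1 / Real.cosh (b * t) ^ 2) * b) t := by
      have := (hd_tanh (b * t)).comp t ((hasDerivAt_id t).const_mul b)
      simpa [Function.comp_def] using this
    have := (((hasDerivAt_id t).const_mul (a ^ 2 - b ^ 2)).sub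
      ((h1.const_mul a).sub (h2.const_mul b)))
    simpa [mul_comm, Pi.sub_def] using this
  apply monotone_of_deriv_nonneg (fun t => (hg t).differentiableAt)
  intro t
  rw [(hg t).deriv]
  rw [one_div_cosh_sq, one_div_cosh_sq]
  have h1 : Real.tanh (b * t) ^ 2 ≤ Real.tanh (a * t) ^ 2 := by
    apply sq_tanh_le
    rw [abs_mul, abs_mul]
    exact mul_le_mul_of_nonneg_right
      (by rwa [abs_of_nonneg hb, abs_of_nonneg (hb.trans hba)]) (abs_nonneg t)
  have hb2 : b ^ 2 ≤ a ^ 2 := by nlinarith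
  have hmul : b ^ 2 * Real.tanh (b * t) ^ 2 ≤ a ^ 2 * Real.tanh (a * t) ^ 2 :=
    mul_le_mul hb2 h1 (sq_nonneg _) (sq_nonneg a)
  nlinarith [hmul]

private lemma core_abs {a b t : ℝ} (hb : 0 ≤ b) (hba : b ≤ a) (ht : 0 ≤ t) :
    |a * Real.tanh (a * t) - b * Real.tanh (b * t)| ≤ (a ^ 2 - b ^ 2) * t := by
  have ha : 0 ≤ a := hb.trans hba
  have hupper : a * Real.tanh (a * t) - b * Real.tanh (b * t) ≤ (a ^ 2 - b ^ 2) * t := by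
    have := core_mono hb hba ht
    simpa [Real.tanh_zero] using this
  have hlow : 0 ≤ a * Real.tanh (a * t) - b * Real.tanh (b * t) := by
    have hbt : 0 ≤ b * t := mul_nonneg hb ht
    have hat : b * t ≤ a * t := mul_le_mul_of_nonneg_right hba ht
    have := tanh_sm.monotone hat
    have h0 := tanh_nonneg' hbt
    nlinarith
  rw [abs_of_nonneg hlow]
  exact hupper

private lemma even_arg (x θ : ℝ) : x * Real.tanh (x * θ) = |x| * Real.tanh (|x| * θ) := by
  rcases abs_cases x with ⟨h, _⟩ | ⟨h, _⟩
  · rw [h]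
  · rw [h, show -x * θ = -(x * θ) by ring, Real.tanh_neg]; ring

private lemma absbound_aux {x y : ℝ} (θ : ℝ) (h : y ^ 2 ≤ x ^ 2) :
    |x * Real.tanh (x * θ) - y * Real.tanh (y * θ)| ≤ (x ^ 2 - y ^ 2) * |θ| := by
  have hyx : |y| ≤ |x| := by
    rw [← sq_abs x, ← sq_abs y] at h
    nlinarith [abs_nonneg x, abs_nonneg y]
  rw [even_arg x θ, even_arg y θ]
  rcases le_total 0 θ with hθ | hθ
  · have := core_abs (abs_nonneg y) hyx hθ
    rw [abs_of_nonneg hθ]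
    calc |(|x|) * Real.tanh (|x| * θ) - |y| * Real.tanh (|y| * θ)|
        ≤ (|x| ^ 2 - |y| ^ 2) * θ := this
      _ = (x ^ 2 - y ^ 2) * θ := by rw [sq_abs, sq_abs]
  · have hθ' : 0 ≤ -θ := neg_nonneg.2 hθ
    have := core_abs (abs_nonneg y) hyx hθ'
    rw [abs_of_nonpos hθ]
    calc |(|x|) * Real.tanh (|x| * θ) - |y| * Real.tanh (|y| * θ)|
        = |(|x|) * Real.tanh (|x| * -θ) - |y| * Real.tanh (|y| * -θ)| := by
          rw [show |x| * -θ = -(|x| * θ) by ring, show |y| * -θ = -(|y| * θ) by ring,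
            Real.tanh_neg, Real.tanh_neg, show |x| * -Real.tanh (|x| * θ) - |y| * -Real.tanh (|y| * θ)
              = -((|x|) * Real.tanh (|x| * θ) - |y| * Real.tanh (|y| * θ)) by ring, abs_neg]
      _ ≤ (|x| ^ 2 - |y| ^ 2) * -θ := this
      _ = (x ^ 2 - y ^ 2) * -θ := by rw [sq_abs, sq_abs]

private lemma absbound (x y θ : ℝ) :
    |x * Real.tanh (x * θ) - y * Real.tanh (y * θ)| ≤ |x ^ 2 - y ^ 2| * |θ| := by
  rcases le_total (y ^ 2) (x ^ 2) with h | h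
  · rw [abs_of_nonneg (sub_nonneg.2 h)]
    exact absbound_aux θ h
  · rw [abs_of_nonpos (sub_nonpos.2 h), abs_sub_comm, neg_sub]
    exact absbound_aux θ h

/-- For all real `x` and `y`, the supremum over `θ ∈ ℝ` of
`|x·tanh(xθ) − y·tanh(yθ)|/|θ|` equals `|x² − y²|`
(the ratio at `θ = 0` being interpreted as its limit `|x² − y²|`). -/
theorem stmt_0 (x y : ℝ) :
    IsLUB {r : ℝ | ∃ θ : ℝ, θ ≠ 0 ∧
        r = |x * Real.tanh (x * θ) - y * Real.tanh (y * θ)| / |θ|}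
      |x ^ 2 - y ^ 2| := by
  set F : ℝ → ℝ := fun θ => x * Real.tanh (x * θ) - y * Real.tanh (y * θ) with hF
  constructor
  · rintro r ⟨θ, hθ, rfl⟩
    rw [div_le_iff₀ (abs_pos.2 hθ)]
    exact absbound x y θ
  · intro b hb
    by_contra hlt
    push_neg at hlt
    have hder : HasDerivAt F (x ^ 2 - y ^ 2) 0 := by
      have h1 : HasDerivAt (fun θ : ℝ => Real.tanh (x * θ))
          ((1 / Real.cosh (x * 0) ^ 2) * x) 0 := by
        have := (hd_tanh (x * 0)).comp 0 ((hasDerivAt_id 0).const_mul x)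
        simpa [Function.comp_def] using this
      have h2 : HasDerivAt (fun θ : ℝ => Real.tanh (y * θ))
          ((1 / Real.cosh (y * 0) ^ 2) * y) 0 := by
        have := (hd_tanh (y * 0)).comp 0 ((hasDerivAt_id 0).const_mul y)
        simpa [Function.comp_def] using this
      have := (h1.const_mul x).sub (h2.const_mul y)
      refine this.congr_deriv ?_
      simp [Real.cosh_zero]
      ring
    have hslope := hasDerivAt_iff_tendsto_slope.mp hder
    have habs := hslope.abs
    have hev := habs.eventually_const_lt hlt
    obtain ⟨θ, hθlt, hθne⟩ := (hev.and self_mem_nhdsWithin).exists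
    have hmem : |F θ| / |θ| ∈ {r : ℝ | ∃ θ : ℝ, θ ≠ 0 ∧
        r = |x * Real.tanh (x * θ) - y * Real.tanh (y * θ)| / |θ|} := ⟨θ, hθne, rfl⟩
    have hle := hb hmem
    have hsl : |slope F 0 θ| = |F θ| / |θ| := by
      rw [slope_def_field]
      have : F 0 = 0 := by simp [hF, Real.tanh_zero]
      rw [this, sub_zero, sub_zero, abs_div]
    rw [hsl] at hθlt
    linarith
end

section
/- For x ≥ 0 and θ ≥ 0, the map θ ↦ (∂/∂x)(x·tanh(xθ)/θ) is nonincreasing; equivalently, (∂/∂θ)(∂/∂x)(x·tanh(xθ)/θ) = (1/(θ²·cosh²(θx)))·(θx − (1/2)·sinh(2θx) − 2(θx)²·tanh(θx)) ≤ 0. -/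
lemma tanh_hasDerivAt (y : ℝ) : HasDerivAt Real.tanh (1 / Real.cosh y ^ 2) y := by
  have h := (Real.hasDerivAt_sinh y).div (Real.hasDerivAt_cosh y) (Real.cosh_pos y).ne'
  have e : Real.tanh = fun t => Real.sinh t / Real.cosh t :=
    funext fun t => Real.tanh_eq_sinh_div_cosh t
  rw [e]
  refine h.congr_deriv ?_
  have h2 := Real.cosh_sq_sub_sinh_sq y
  have hc := (Real.cosh_pos y).ne'
  field_simp
  nlinarith

lemma hasDerivAt_inner (θ u : ℝ) (hθ : θ ≠ 0) :
    HasDerivAt (fun u : ℝ => u * Real.tanh (u * θ) / θ)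
      (Real.tanh (u * θ) / θ + u / Real.cosh (u * θ) ^ 2) u := by
  have h1 : HasDerivAt (fun v : ℝ => Real.tanh (v * θ)) (1 / Real.cosh (u * θ) ^ 2 * θ) u :=
    by have := (hasDerivAt_id u).mul_const θ; simp at this; exact (tanh_hasDerivAt (u * θ)).comp u this
  have h2 := ((hasDerivAt_id u).mul h1).div_const θ
  have hc := (Real.cosh_pos (u * θ)).ne'
  simp only [id_eq, one_mul] at h2
  refine h2.congr_deriv ?_
  field_simp

lemma hasDerivAt_g (x θ : ℝ) (hθ : θ ≠ 0) :
    HasDerivAt (fun t : ℝ => Real.tanh (x * t) / t + x / Real.cosh (x * t) ^ 2)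
      (1 / (θ ^ 2 * Real.cosh (θ * x) ^ 2) *
        (θ * x - (1 / 2) * Real.sinh (2 * θ * x)
          - 2 * (θ * x) ^ 2 * Real.tanh (θ * x))) θ := by
  have hc := (Real.cosh_pos (x * θ)).ne'
  have h1 : HasDerivAt (fun t : ℝ => Real.tanh (x * t)) (1 / Real.cosh (x * θ) ^ 2 * x) θ :=
    (tanh_hasDerivAt (x * θ)).comp θ (by simpa using (hasDerivAt_id θ).const_mul x)
  have h2 := h1.div (hasDerivAt_id θ) hθ
  have h3 : HasDerivAt (fun t : ℝ => Real.cosh (x * t)) (Real.sinh (x * θ) * x) θ :=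
    (Real.hasDerivAt_cosh (x * θ)).comp θ (by simpa using (hasDerivAt_id θ).const_mul x)
  have h4 := h3.pow 2
  have h5 := (hasDerivAt_const θ x).div h4 (pow_ne_zero 2 hc)
  have h6 := h2.add h5
  refine h6.congr_deriv ?_
  rw [show (2 : ℝ) * θ * x = 2 * (x * θ) by ring, Real.sinh_two_mul,
    show θ * x = x * θ by ring, Real.tanh_eq_sinh_div_cosh]
  simp only [id_eq, Pi.pow_apply]
  have h7 := Real.cosh_sq_sub_sinh_sq (x * θ)
  field_simp
  ring_nf

/-- For `x ≥ 0`, the map `θ ↦ (∂/∂x)(x·tanh(xθ)/θ)` is nonincreasing on `θ ≥ 0`;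
equivalently, its `θ`-derivative equals
`(1/(θ²·cosh²(θx)))·(θx − (1/2)·sinh(2θx) − 2(θx)²·tanh(θx))`, which is `≤ 0`. -/
theorem stmt_1 (x : ℝ) (hx : 0 ≤ x) :
    AntitoneOn (fun θ : ℝ => deriv (fun u : ℝ => u * Real.tanh (u * θ) / θ) x)
      (Set.Ioi 0) ∧
    ∀ θ : ℝ, 0 ≤ θ →
      deriv (fun t : ℝ => deriv (fun u : ℝ => u * Real.tanh (u * t) / t) x) θ =
        1 / (θ ^ 2 * Real.cosh (θ * x) ^ 2) *
          (θ * x - (1 / 2) * Real.sinh (2 * θ * x)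
            - 2 * (θ * x) ^ 2 * Real.tanh (θ * x)) ∧
      1 / (θ ^ 2 * Real.cosh (θ * x) ^ 2) *
          (θ * x - (1 / 2) * Real.sinh (2 * θ * x)
            - 2 * (θ * x) ^ 2 * Real.tanh (θ * x)) ≤ 0 := by
  set F : ℝ → ℝ := fun t => deriv (fun u : ℝ => u * Real.tanh (u * t) / t) x with hFdef
  set g : ℝ → ℝ := fun t => Real.tanh (x * t) / t + x / Real.cosh (x * t) ^ 2 with hgdef
  have hFg : ∀ θ : ℝ, θ ≠ 0 → F =ᶠ[nhds θ] g := by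
    intro θ hθ
    filter_upwards [eventually_ne_nhds hθ] with t ht
    exact (hasDerivAt_inner t x ht).deriv
  have hFd : ∀ θ : ℝ, θ ≠ 0 →
      HasDerivAt F (1 / (θ ^ 2 * Real.cosh (θ * x) ^ 2) *
        (θ * x - (1 / 2) * Real.sinh (2 * θ * x)
          - 2 * (θ * x) ^ 2 * Real.tanh (θ * x))) θ :=
    fun θ hθ => (hasDerivAt_g x θ hθ).congr_of_eventuallyEq (hFg θ hθ)
  have hle : ∀ θ : ℝ, 0 ≤ θ →
      1 / (θ ^ 2 * Real.cosh (θ * x) ^ 2) *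
        (θ * x - (1 / 2) * Real.sinh (2 * θ * x)
          - 2 * (θ * x) ^ 2 * Real.tanh (θ * x)) ≤ 0 := by
    intro θ hθ
    have h0 : 0 ≤ θ * x := mul_nonneg hθ hx
    have hs : 2 * (θ * x) ≤ Real.sinh (2 * (θ * x)) :=
      Real.self_le_sinh_iff.mpr (by linarith)
    have ht : 0 ≤ Real.tanh (θ * x) := by
      rw [Real.tanh_eq_sinh_div_cosh]
      exact div_nonneg (Real.sinh_nonneg_iff.mpr h0) (Real.cosh_pos _).le
    have htt : 0 ≤ 2 * (θ * x) ^ 2 * Real.tanh (θ * x) := by positivity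
    apply mul_nonpos_of_nonneg_of_nonpos (by positivity)
    rw [show (2 : ℝ) * θ * x = 2 * (θ * x) by ring]
    nlinarith
  constructor
  · apply antitoneOn_of_deriv_nonpos (convex_Ioi 0)
    · exact fun θ hθ =>
        ((hFd θ (ne_of_gt hθ)).differentiableAt.continuousAt).continuousWithinAt
    · rw [interior_Ioi]
      exact fun θ hθ => (hFd θ (ne_of_gt hθ)).differentiableAt.differentiableWithinAt
    · rw [interior_Ioi]
      intro θ hθ
      rw [(hFd θ (ne_of_gt hθ)).deriv]
      exact hle θ hθ.le
  · intro θ hθ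
    refine ⟨?_, hle θ hθ⟩
    rcases eq_or_lt_of_le hθ with h0 | h0
    · subst h0
      have hR : 1 / ((0:ℝ) ^ 2 * Real.cosh (0 * x) ^ 2) *
          (0 * x - (1 / 2) * Real.sinh (2 * 0 * x)
            - 2 * ((0:ℝ) * x) ^ 2 * Real.tanh (0 * x)) = 0 := by
        norm_num
      rw [hR]
      rcases eq_or_lt_of_le hx with hx0 | hx0
      · have hF0 : F = fun _ => 0 := by
          funext t
          by_cases ht : t = 0
          · subst ht; simp [hFdef]
          · show deriv (fun u : ℝ => u * Real.tanh (u * t) / t) x = 0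
            rw [(hasDerivAt_inner t x ht).deriv, ← hx0]
            simp
        rw [hF0]
        simp
      · apply deriv_zero_of_not_differentiableAt
        intro hd
        have hF0 : F 0 = 0 := by simp [hFdef]
        have t2 : Filter.Tendsto F (nhdsWithin 0 {(0:ℝ)}ᶜ) (nhds 0) := by
          have := hd.continuousAt.tendsto
          rw [hF0] at this
          exact this.mono_left nhdsWithin_le_nhds
        have hdt : HasDerivAt (fun t : ℝ => Real.tanh (x * t)) x 0 := by
          have := (tanh_hasDerivAt (x * 0)).comp 0
            (by simpa using (hasDerivAt_id (0:ℝ)).const_mul x)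
          simp at this; exact this
        have ttanh : Filter.Tendsto (fun t : ℝ => Real.tanh (x * t) / t)
            (nhdsWithin 0 {(0:ℝ)}ᶜ) (nhds x) := by
          have ts := hasDerivAt_iff_tendsto_slope.mp hdt
          refine ts.congr fun t => ?_
          simp [slope_def_field]
        have tcos : Filter.Tendsto (fun t : ℝ => x / Real.cosh (x * t) ^ 2)
            (nhdsWithin 0 {(0:ℝ)}ᶜ) (nhds x) := by
          have hca : ContinuousAt (fun t : ℝ => x / Real.cosh (x * t) ^ 2) 0 := by
            apply ContinuousAt.div continuousAt_const
            · exact ((Real.continuous_cosh.comp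
                (continuous_const.mul continuous_id)).pow 2).continuousAt
            · exact pow_ne_zero 2 (Real.cosh_pos (x * 0)).ne'
          have := hca.tendsto
          simp only [mul_zero, Real.cosh_zero, one_pow, div_one] at this
          exact this.mono_left nhdsWithin_le_nhds
        have tg : Filter.Tendsto g (nhdsWithin 0 {(0:ℝ)}ᶜ) (nhds (x + x)) :=
          ttanh.add tcos
        have hev : F =ᶠ[nhdsWithin 0 {(0:ℝ)}ᶜ] g := by
          filter_upwards [eventually_mem_nhdsWithin] with t ht
          exact (hasDerivAt_inner t x ht).deriv
        have t1 : Filter.Tendsto F (nhdsWithin 0 {(0:ℝ)}ᶜ) (nhds (x + x)) :=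
          tg.congr' hev.symm
        have := tendsto_nhds_unique t2 t1
        linarith
    · exact (hFd θ (ne_of_gt h0)).deriv
end

section
/- Let Y ∼ (1/2)N(−θ*,1) + (1/2)N(θ*,1) and f(θ) = E[Y·tanh(θY)]. Then f(0) = 0, f'(0) = 1 + θ*², f''(0) = 0, and f'(θ*) ≤ exp(−θ*²/2). -/
open MeasureTheory ProbabilityTheory
open scoped ENNReal

/-- The symmetric two-component Gaussian mixture `(1/2)N(−s,1) + (1/2)N(s,1)`. -/
noncomputable def mixG (s : ℝ) : Measure ℝ :=
  (1 / 2 : ℝ≥0∞) • gaussianReal (-s) 1 + (1 / 2 : ℝ≥0∞) • gaussianReal s 1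

/-- The population EM map `f(θ) = E[Y·tanh(θY)]`, `Y ∼ mixG s`. -/
noncomputable def emMap (s θ : ℝ) : ℝ := ∫ y, y * Real.tanh (θ * y) ∂(mixG s)

open Real Filter
open scoped NNReal

namespace StmtAux


lemma tanh_eq_div (x : ℝ) : Real.tanh x = Real.sinh x / Real.cosh x :=
  Real.tanh_eq_sinh_div_cosh x

lemma continuous_tanh : Continuous Real.tanh := by
  have : Real.tanh = fun x => Real.sinh x / Real.cosh x := funext tanh_eq_div
  rw [this]
  exact Real.continuous_sinh.div Real.continuous_cosh fun x => (Real.cosh_pos x).ne'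

lemma tanh_hasDerivAt (x : ℝ) : HasDerivAt Real.tanh (1 - Real.tanh x ^ 2) x := by
  have h : HasDerivAt (fun y => Real.sinh y / Real.cosh y)
      ((Real.cosh x * Real.cosh x - Real.sinh x * Real.sinh x) / Real.cosh x ^ 2) x :=
    (Real.hasDerivAt_sinh x).div (Real.hasDerivAt_cosh x) (Real.cosh_pos x).ne'
  have heq : Real.tanh = fun y => Real.sinh y / Real.cosh y := funext tanh_eq_div
  rw [heq]
  convert h using 1
  show 1 - (Real.sinh x / Real.cosh x) ^ 2 = _
  have hc := (Real.cosh_pos x).ne'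
  field_simp

lemma tanh_sq_le_one (x : ℝ) : Real.tanh x ^ 2 ≤ 1 := by
  rw [tanh_eq_div, div_pow, div_le_one (by positivity)]
  nlinarith [Real.cosh_sq_sub_sinh_sq x]

lemma abs_tanh_le_one (x : ℝ) : |Real.tanh x| ≤ 1 := by
  rw [abs_le_one_iff_mul_self_le_one]
  nlinarith [tanh_sq_le_one x]

lemma one_sub_tanh_sq_nonneg (x : ℝ) : 0 ≤ 1 - Real.tanh x ^ 2 := by
  nlinarith [tanh_sq_le_one x]

lemma one_sub_tanh_sq_mul_cosh_sq (x : ℝ) :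
    (1 - Real.tanh x ^ 2) * Real.cosh x ^ 2 = 1 := by
  have hc := (Real.cosh_pos x).ne'
  rw [tanh_eq_div]
  field_simp
  linarith [Real.cosh_sq_sub_sinh_sq x]

lemma pdf_eq (m x : ℝ) :
    gaussianPDFReal m 1 x = (Real.sqrt (2 * π))⁻¹ * rexp (-(x - m) ^ 2 / 2) := by
  simp [gaussianPDFReal]

lemma continuous_pdf (m : ℝ) : Continuous (gaussianPDFReal m 1) := by
  have : gaussianPDFReal m 1 = fun x => (Real.sqrt (2 * π))⁻¹ * rexp (-(x - m) ^ 2 / 2) :=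
    funext (pdf_eq m)
  rw [this]; fun_prop

lemma integrable_abs_pow_mul_pdf (n : ℕ) (m : ℝ) :
    Integrable (fun x => |x| ^ n * gaussianPDFReal m 1 x) := by
  have h1 : Integrable (fun x : ℝ => x ^ n * rexp (-(4 : ℝ)⁻¹ * x ^ 2)) := by
    have := integrable_rpow_mul_exp_neg_mul_sq (b := (4 : ℝ)⁻¹) (by norm_num) (s := (n : ℝ))
      (lt_of_lt_of_le (by norm_num) (Nat.cast_nonneg n))
    simpa [Real.rpow_natCast] using this
  have h2 : Integrable (fun x : ℝ => |x| ^ n * rexp (-(4 : ℝ)⁻¹ * x ^ 2)) := by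
    have := h1.abs
    simpa [abs_mul, abs_pow, abs_of_pos (Real.exp_pos _)] using this
  refine Integrable.mono' (h2.const_mul ((Real.sqrt (2 * π))⁻¹ * rexp (m ^ 2 / 2)))
    (((continuous_abs.pow n).mul (continuous_pdf m)).aestronglyMeasurable)
    (Filter.Eventually.of_forall fun x => ?_)
  have hpdf : gaussianPDFReal m 1 x
      ≤ (Real.sqrt (2 * π))⁻¹ * (rexp (m ^ 2 / 2) * rexp (-(4 : ℝ)⁻¹ * x ^ 2)) := by
    rw [pdf_eq, ← Real.exp_add]
    exact mul_le_mul_of_nonneg_left (Real.exp_le_exp.2 (by nlinarith [sq_nonneg (x - 2 * m)]))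
      (inv_nonneg.2 (Real.sqrt_nonneg _))
  rw [Real.norm_eq_abs, abs_of_nonneg (mul_nonneg (by positivity) (gaussianPDFReal_nonneg m 1 x))]
  calc |x| ^ n * gaussianPDFReal m 1 x
      ≤ |x| ^ n * ((Real.sqrt (2 * π))⁻¹ * (rexp (m ^ 2 / 2) * rexp (-(4 : ℝ)⁻¹ * x ^ 2))) :=
        mul_le_mul_of_nonneg_left hpdf (by positivity)
    _ = (Real.sqrt (2 * π))⁻¹ * rexp (m ^ 2 / 2) * (|x| ^ n * rexp (-(4 : ℝ)⁻¹ * x ^ 2)) := by ring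

lemma gaussianReal_eq_withDensity (m : ℝ) :
    gaussianReal m 1 = volume.withDensity
      (fun x => ((gaussianPDFReal m 1 x).toNNReal : ℝ≥0∞)) := by
  rw [gaussianReal_of_var_ne_zero m one_ne_zero]
  rfl

lemma integrable_gaussianReal_iff {m : ℝ} {g : ℝ → ℝ} :
    Integrable g (gaussianReal m 1) ↔
      Integrable (fun x => gaussianPDFReal m 1 x * g x) volume := by
  rw [gaussianReal_eq_withDensity,
    integrable_withDensity_iff_integrable_smul ((measurable_gaussianPDFReal m 1).real_toNNReal)]
  constructor <;> intro h <;> refine h.congr (Filter.Eventually.of_forall fun x => ?_) <;>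
    simp [NNReal.smul_def, Real.coe_toNNReal _ (gaussianPDFReal_nonneg m 1 x)]

lemma integral_gaussianReal_eq (m : ℝ) (g : ℝ → ℝ) :
    ∫ y, g y ∂(gaussianReal m 1) = ∫ x, gaussianPDFReal m 1 x * g x := by
  rw [gaussianReal_eq_withDensity,
    integral_withDensity_eq_integral_smul ((measurable_gaussianPDFReal m 1).real_toNNReal)]
  congr 1
  funext x
  simp [NNReal.smul_def, Real.coe_toNNReal _ (gaussianPDFReal_nonneg m 1 x)]

lemma integrable_abs_pow_gaussianReal (n : ℕ) (m : ℝ) :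
    Integrable (fun y => |y| ^ n) (gaussianReal m 1) := by
  rw [integrable_gaussianReal_iff]
  exact (integrable_abs_pow_mul_pdf n m).congr
    (Filter.Eventually.of_forall fun x => by ring)

lemma integrable_mixG {s : ℝ} {g : ℝ → ℝ} (h1 : Integrable g (gaussianReal (-s) 1))
    (h2 : Integrable g (gaussianReal s 1)) : Integrable g (mixG s) := by
  rw [mixG]
  exact (h1.smul_measure (by norm_num)).add_measure (h2.smul_measure (by norm_num))

lemma integral_mixG {s : ℝ} {g : ℝ → ℝ} (h1 : Integrable g (gaussianReal (-s) 1))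
    (h2 : Integrable g (gaussianReal s 1)) :
    ∫ y, g y ∂(mixG s) = (1 / 2) * ∫ y, g y ∂(gaussianReal (-s) 1)
      + (1 / 2) * ∫ y, g y ∂(gaussianReal s 1) := by
  rw [mixG, integral_add_measure (h1.smul_measure (by norm_num))
    (h2.smul_measure (by norm_num)), integral_smul_measure, integral_smul_measure]
  norm_num

lemma integrable_abs_pow_mixG (n : ℕ) (s : ℝ) :
    Integrable (fun y => |y| ^ n) (mixG s) :=
  integrable_mixG (integrable_abs_pow_gaussianReal n (-s)) (integrable_abs_pow_gaussianReal n s)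

lemma integral_comp_neg_real (f : ℝ → ℝ) : ∫ x, f (-x) = ∫ x, f x := by
  have A : MeasurableEmbedding fun x : ℝ => -x :=
    (Homeomorph.neg ℝ).isClosedEmbedding.measurableEmbedding
  conv_rhs => rw [← Measure.map_neg_eq_self (volume : Measure ℝ)]
  rw [A.integral_map]

lemma integral_mul_pdf_zero : ∫ x, x * gaussianPDFReal 0 1 x = 0 := by
  have h := integral_comp_neg_real (fun x => x * gaussianPDFReal 0 1 x)
  have heq : ∀ x : ℝ, (-x) * gaussianPDFReal 0 1 (-x) = -(x * gaussianPDFReal 0 1 x) := by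
    intro x
    rw [pdf_eq, pdf_eq]
    ring_nf
  rw [show (fun x : ℝ => (fun y => y * gaussianPDFReal 0 1 y) (-x))
      = fun x => -(x * gaussianPDFReal 0 1 x) from funext heq] at h
  rw [integral_neg] at h
  linarith

lemma tendsto_mul_exp_atTop : Tendsto (fun x : ℝ => x * rexp (-x ^ 2 / 2)) atTop (nhds 0) := by
  have h := rpow_mul_exp_neg_mul_sq_isLittleO_exp_neg (b := (1:ℝ)/2) (by norm_num) 1
  have h2 : Tendsto (fun x : ℝ => rexp (-(1/2 : ℝ) * x)) atTop (nhds 0) := by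
    have hm : Tendsto (fun x : ℝ => (1/2 : ℝ) * x) atTop atTop :=
      tendsto_const_mul_atTop_of_pos (by norm_num) |>.2 tendsto_id
    have h4 := Real.tendsto_exp_neg_atTop_nhds_zero.comp hm
    refine h4.congr' ?_
    filter_upwards with x
    simp only [Function.comp]
    ring_nf
  have h3 := h.isBigO.trans_tendsto h2
  refine h3.congr' ?_
  filter_upwards [eventually_gt_atTop (0:ℝ)] with x hx
  rw [Real.rpow_one]
  ring_nf

lemma integral_exp_neg_sq_half : ∫ x : ℝ, rexp (-x ^ 2 / 2) = Real.sqrt (2 * π) := by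
  have h := integral_gaussian (1/2)
  rw [show π / (1/2) = 2 * π by ring] at h
  rw [← h]
  congr 1
  funext x
  ring_nf

lemma integrable_exp_neg_sq_half : Integrable (fun x : ℝ => rexp (-x ^ 2 / 2)) := by
  have := integrable_exp_neg_mul_sq (b := (1:ℝ)/2) (by norm_num)
  refine this.congr (Filter.Eventually.of_forall fun x => ?_)
  ring_nf

lemma integrable_sq_exp_neg_sq_half : Integrable (fun x : ℝ => x ^ 2 * rexp (-x ^ 2 / 2)) := by
  have h1 : Integrable (fun x : ℝ => x ^ 2 * rexp (-(1/2 : ℝ) * x ^ 2)) := by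
    have := integrable_rpow_mul_exp_neg_mul_sq (b := (1:ℝ)/2) (by norm_num) (s := ((2:ℕ) : ℝ))
      (by norm_num)
    simpa [Real.rpow_natCast] using this
  refine h1.congr (Filter.Eventually.of_forall fun x => ?_)
  ring_nf

lemma integral_sq_exp_neg_sq_half :
    ∫ x : ℝ, x ^ 2 * rexp (-x ^ 2 / 2) = Real.sqrt (2 * π) := by
  have hderiv : ∀ x : ℝ, HasDerivAt (fun y : ℝ => -y * rexp (-y ^ 2 / 2))
      ((x ^ 2 - 1) * rexp (-x ^ 2 / 2)) x := by
    intro x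
    have h1 : HasDerivAt (fun y : ℝ => -y ^ 2 / 2) (-x) x := by
      have := ((hasDerivAt_pow 2 x).neg).div_const 2
      refine this.congr_deriv ?_
      simp
      ring
    have h2 := h1.exp
    have h3 := ((hasDerivAt_id x).neg).mul h2
    refine h3.congr_deriv ?_
    simp only [Pi.neg_apply, id_eq]
    ring
  have hint : Integrable (fun x : ℝ => (x ^ 2 - 1) * rexp (-x ^ 2 / 2)) := by
    have := integrable_sq_exp_neg_sq_half.sub integrable_exp_neg_sq_half
    refine this.congr (Filter.Eventually.of_forall fun x => ?_)
    simp only [Pi.sub_apply]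
    ring
  have htop : Tendsto (fun x : ℝ => -x * rexp (-x ^ 2 / 2)) atTop (nhds 0) := by
    have := tendsto_mul_exp_atTop.neg
    simpa [neg_mul] using this
  have hbot : Tendsto (fun x : ℝ => -x * rexp (-x ^ 2 / 2)) atBot (nhds 0) := by
    have := tendsto_mul_exp_atTop.comp tendsto_neg_atBot_atTop
    refine this.congr' ?_
    filter_upwards with x
    simp only [Function.comp]
    ring_nf
  have hzero := integral_of_hasDerivAt_of_tendsto hderiv hint hbot htop
  rw [sub_zero] at hzero
  have hsub := integral_sub integrable_sq_exp_neg_sq_half integrable_exp_neg_sq_half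
  have : ∫ x : ℝ, (x ^ 2 - 1) * rexp (-x ^ 2 / 2)
      = (∫ x : ℝ, x ^ 2 * rexp (-x ^ 2 / 2)) - ∫ x : ℝ, rexp (-x ^ 2 / 2) := by
    rw [← hsub]
    congr 1
    funext x
    ring
  rw [this] at hzero
  rw [integral_exp_neg_sq_half] at hzero
  linarith

lemma integral_sq_mul_pdf_zero : ∫ x, x ^ 2 * gaussianPDFReal 0 1 x = 1 := by
  have : (fun x : ℝ => x ^ 2 * gaussianPDFReal 0 1 x)
      = fun x => (Real.sqrt (2 * π))⁻¹ * (x ^ 2 * rexp (-x ^ 2 / 2)) := by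
    funext x
    rw [pdf_eq]
    ring_nf
  rw [this, integral_const_mul, integral_sq_exp_neg_sq_half]
  have hpos : (0:ℝ) < Real.sqrt (2 * π) := Real.sqrt_pos.2 (by positivity)
  field_simp

lemma integrable_sq_mul_pdf (m : ℝ) : Integrable (fun x => x ^ 2 * gaussianPDFReal m 1 x) :=
  (integrable_abs_pow_mul_pdf 2 m).congr (Filter.Eventually.of_forall fun x => by simp [sq_abs])

lemma integrable_id_mul_pdf (m : ℝ) : Integrable (fun x => x * gaussianPDFReal m 1 x) := by
  refine (integrable_abs_pow_mul_pdf 1 m).mono'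
    ((continuous_id.mul (continuous_pdf m)).aestronglyMeasurable)
    (Filter.Eventually.of_forall fun x => ?_)
  rw [Real.norm_eq_abs, abs_mul, abs_of_nonneg (gaussianPDFReal_nonneg m 1 x), pow_one]

lemma integral_sq_gaussianReal (m : ℝ) : ∫ y, y ^ 2 ∂(gaussianReal m 1) = 1 + m ^ 2 := by
  rw [integral_gaussianReal_eq]
  have key : ∀ x : ℝ, gaussianPDFReal m 1 (x + m) * (x + m) ^ 2
      = x ^ 2 * gaussianPDFReal 0 1 x + ((2 * m) * (x * gaussianPDFReal 0 1 x)
        + m ^ 2 * gaussianPDFReal 0 1 x) := by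
    intro x
    rw [gaussianPDFReal_add, sub_self]
    ring
  have ia := integrable_sq_mul_pdf 0
  have hb : Integrable (fun x : ℝ => (2 * m) * (x * gaussianPDFReal 0 1 x)) := by
    exact (integrable_id_mul_pdf 0).const_mul (2 * m)
  have hc : Integrable (fun x : ℝ => m ^ 2 * gaussianPDFReal 0 1 x) := by
    exact (integrable_gaussianPDFReal 0 1).const_mul (m ^ 2)
  have hbc : Integrable (fun x : ℝ => (2 * m) * (x * gaussianPDFReal 0 1 x)
      + m ^ 2 * gaussianPDFReal 0 1 x) := by exact hb.add hc
  calc ∫ x, gaussianPDFReal m 1 x * x ^ 2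
      = ∫ x, gaussianPDFReal m 1 (x + m) * (x + m) ^ 2 :=
        (integral_add_right_eq_self (fun x => gaussianPDFReal m 1 x * x ^ 2) m).symm
    _ = ∫ x, (x ^ 2 * gaussianPDFReal 0 1 x + ((2 * m) * (x * gaussianPDFReal 0 1 x)
        + m ^ 2 * gaussianPDFReal 0 1 x)) := by simp_rw [key]
    _ = 1 + m ^ 2 := by
        rw [integral_add ia hbc, integral_add hb hc,
          integral_const_mul, integral_const_mul, integral_sq_mul_pdf_zero,
          integral_mul_pdf_zero, integral_gaussianPDFReal_eq_one 0 one_ne_zero]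
        ring

lemma integrable_sq_gaussianReal (m : ℝ) : Integrable (fun y : ℝ => y ^ 2) (gaussianReal m 1) :=
  (integrable_abs_pow_gaussianReal 2 m).congr (Filter.Eventually.of_forall fun x => by simp [sq_abs])

lemma integral_sq_mixG (s : ℝ) : ∫ y, y ^ 2 ∂(mixG s) = 1 + s ^ 2 := by
  rw [integral_mixG (integrable_sq_gaussianReal (-s)) (integrable_sq_gaussianReal s),
    integral_sq_gaussianReal, integral_sq_gaussianReal]
  ring

lemma hasDerivAt_inner (y θ : ℝ) :
    HasDerivAt (fun t => y * Real.tanh (t * y)) (y ^ 2 * (1 - Real.tanh (θ * y) ^ 2)) θ := by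
  have h1 : HasDerivAt (fun t : ℝ => t * y) y θ := hasDerivAt_mul_const y
  have h2 := (tanh_hasDerivAt (θ * y)).comp θ h1
  have h3 := h2.const_mul y
  refine h3.congr_deriv ?_
  ring

lemma hasDerivAt_inner2 (y θ : ℝ) :
    HasDerivAt (fun t => y ^ 2 * (1 - Real.tanh (t * y) ^ 2))
      ((-2) * (y ^ 3 * (Real.tanh (θ * y) * (1 - Real.tanh (θ * y) ^ 2)))) θ := by
  have h1 : HasDerivAt (fun t : ℝ => t * y) y θ := hasDerivAt_mul_const y
  have h2 := (tanh_hasDerivAt (θ * y)).comp θ h1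
  have h3 := h2.pow 2
  have h4 := (h3.const_sub 1).const_mul (y ^ 2)
  refine h4.congr_deriv ?_
  simp only [Function.comp_apply]
  push_cast
  ring

lemma aesm_F (s θ : ℝ) :
    AEStronglyMeasurable (fun y : ℝ => y * Real.tanh (θ * y)) (mixG s) :=
  (continuous_id.mul (continuous_tanh.comp (continuous_const.mul continuous_id))).aestronglyMeasurable

lemma aesm_F' (s θ : ℝ) :
    AEStronglyMeasurable (fun y : ℝ => y ^ 2 * (1 - Real.tanh (θ * y) ^ 2)) (mixG s) := by
  have : Continuous (fun y : ℝ => y ^ 2 * (1 - Real.tanh (θ * y) ^ 2)) := by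
    have := continuous_tanh
    fun_prop
  exact this.aestronglyMeasurable

lemma integrable_F (s θ : ℝ) :
    Integrable (fun y : ℝ => y * Real.tanh (θ * y)) (mixG s) := by
  refine (integrable_abs_pow_mixG 1 s).mono' (aesm_F s θ)
    (Filter.Eventually.of_forall fun y => ?_)
  rw [Real.norm_eq_abs, abs_mul, pow_one]
  exact mul_le_of_le_one_right (abs_nonneg y) (abs_tanh_le_one _)

lemma integrable_F' (s θ : ℝ) :
    Integrable (fun y : ℝ => y ^ 2 * (1 - Real.tanh (θ * y) ^ 2)) (mixG s) := by
  refine (integrable_abs_pow_mixG 2 s).mono' (aesm_F' s θ)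
    (Filter.Eventually.of_forall fun y => ?_)
  rw [Real.norm_eq_abs, abs_mul, abs_pow]
  refine mul_le_of_le_one_right (by positivity) ?_
  rw [abs_le]
  constructor <;> nlinarith [tanh_sq_le_one (θ * y), sq_nonneg (Real.tanh (θ * y))]

lemma hasDerivAt_emMap (s θ₀ : ℝ) :
    HasDerivAt (emMap s) (∫ y, y ^ 2 * (1 - Real.tanh (θ₀ * y) ^ 2) ∂(mixG s)) θ₀ := by
  have h := hasDerivAt_integral_of_dominated_loc_of_deriv_le (μ := mixG s)
    (F := fun θ y => y * Real.tanh (θ * y))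
    (F' := fun θ y => y ^ 2 * (1 - Real.tanh (θ * y) ^ 2))
    (x₀ := θ₀) (bound := fun y => |y| ^ 2) (Metric.ball_mem_nhds θ₀ one_pos)
    (Filter.Eventually.of_forall fun θ => aesm_F s θ)
    (integrable_F s θ₀) (aesm_F' s θ₀)
    (Filter.Eventually.of_forall fun y θ _ => ?_)
    (integrable_abs_pow_mixG 2 s)
    (Filter.Eventually.of_forall fun y θ _ => hasDerivAt_inner y θ)
  · exact h.2
  · rw [Real.norm_eq_abs, abs_mul, abs_pow]
    refine mul_le_of_le_one_right (by positivity) ?_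
    rw [abs_le]
    constructor <;> nlinarith [tanh_sq_le_one (θ * y), sq_nonneg (Real.tanh (θ * y))]

lemma deriv_emMap (s θ : ℝ) :
    deriv (emMap s) θ = ∫ y, y ^ 2 * (1 - Real.tanh (θ * y) ^ 2) ∂(mixG s) :=
  (hasDerivAt_emMap s θ).deriv

lemma hasDerivAt_G_zero (s : ℝ) :
    HasDerivAt (fun θ => ∫ y, y ^ 2 * (1 - Real.tanh (θ * y) ^ 2) ∂(mixG s)) 0 0 := by
  have h := hasDerivAt_integral_of_dominated_loc_of_deriv_le (μ := mixG s)
    (F := fun θ y => y ^ 2 * (1 - Real.tanh (θ * y) ^ 2))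
    (F' := fun θ y => (-2) * (y ^ 3 * (Real.tanh (θ * y) * (1 - Real.tanh (θ * y) ^ 2))))
    (x₀ := 0) (bound := fun y => 2 * |y| ^ 3) (Metric.ball_mem_nhds 0 one_pos)
    (Filter.Eventually.of_forall fun θ => aesm_F' s θ)
    (integrable_F' s 0) ?_
    (Filter.Eventually.of_forall fun y θ _ => ?_)
    ((integrable_abs_pow_mixG 3 s).const_mul 2)
    (Filter.Eventually.of_forall fun y θ _ => hasDerivAt_inner2 y θ)
  · have h2 := h.2
    have : ∫ y, (-2) * (y ^ 3 * (Real.tanh ((0:ℝ) * y) * (1 - Real.tanh ((0:ℝ) * y) ^ 2)))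
        ∂(mixG s) = 0 := by
      simp [Real.tanh_zero]
    rwa [this] at h2
  · have : Continuous (fun y : ℝ =>
        (-2) * (y ^ 3 * (Real.tanh ((0:ℝ) * y) * (1 - Real.tanh ((0:ℝ) * y) ^ 2)))) := by
      have := continuous_tanh
      fun_prop
    exact this.aestronglyMeasurable
  · have h1 : |Real.tanh (θ * y)| ≤ 1 := abs_tanh_le_one _
    have h2 : |1 - Real.tanh (θ * y) ^ 2| ≤ 1 := by
      rw [abs_le]
      constructor <;> nlinarith [tanh_sq_le_one (θ * y), sq_nonneg (Real.tanh (θ * y))]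
    rw [Real.norm_eq_abs]
    have hexp : |(-2 : ℝ) * (y ^ 3 * (Real.tanh (θ * y) * (1 - Real.tanh (θ * y) ^ 2)))|
        = 2 * (|y| ^ 3 * (|Real.tanh (θ * y)| * |1 - Real.tanh (θ * y) ^ 2|)) := by
      rw [abs_mul, abs_mul, abs_mul, abs_pow]
      norm_num
    rw [hexp]
    have hle : |Real.tanh (θ * y)| * |1 - Real.tanh (θ * y) ^ 2| ≤ 1 := by
      nlinarith [abs_nonneg (Real.tanh (θ * y)), abs_nonneg (1 - Real.tanh (θ * y) ^ 2)]
    have h3 : |y| ^ 3 * (|Real.tanh (θ * y)| * |1 - Real.tanh (θ * y) ^ 2|) ≤ |y| ^ 3 * 1 :=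
      mul_le_mul_of_nonneg_left hle (by positivity)
    show 2 * (|y| ^ 3 * (|Real.tanh (θ * y)| * |1 - Real.tanh (θ * y) ^ 2|)) ≤ 2 * |y| ^ 3
    linarith

lemma integrable_F'_of {μ : Measure ℝ} (h2 : Integrable (fun y : ℝ => |y| ^ 2) μ) (θ : ℝ) :
    Integrable (fun y : ℝ => y ^ 2 * (1 - Real.tanh (θ * y) ^ 2)) μ := by
  have hcont : Continuous (fun y : ℝ => y ^ 2 * (1 - Real.tanh (θ * y) ^ 2)) := by
    have := continuous_tanh
    fun_prop
  refine h2.mono' hcont.aestronglyMeasurable (Filter.Eventually.of_forall fun y => ?_)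
  rw [Real.norm_eq_abs, abs_mul, abs_pow]
  refine mul_le_of_le_one_right (by positivity) ?_
  rw [abs_le]
  constructor <;> nlinarith [tanh_sq_le_one (θ * y), sq_nonneg (Real.tanh (θ * y))]

lemma pdf_sum_eq (s x : ℝ) :
    gaussianPDFReal (-s) 1 x + gaussianPDFReal s 1 x
      = 2 * rexp (-s ^ 2 / 2) * Real.cosh (s * x) * gaussianPDFReal 0 1 x := by
  rw [pdf_eq, pdf_eq, pdf_eq, Real.cosh_eq]
  have e1 : rexp (-(x - -s) ^ 2 / 2) = rexp (-s ^ 2 / 2) * (rexp (-(s * x)) * rexp (-(x - 0) ^ 2 / 2)) := by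
    rw [← Real.exp_add, ← Real.exp_add]
    congr 1
    ring
  have e2 : rexp (-(x - s) ^ 2 / 2) = rexp (-s ^ 2 / 2) * (rexp (s * x) * rexp (-(x - 0) ^ 2 / 2)) := by
    rw [← Real.exp_add, ← Real.exp_add]
    congr 1
    ring
  rw [e1, e2]
  ring

lemma bound_pointwise (s x : ℝ) :
    1 / 2 * (gaussianPDFReal (-s) 1 x * (x ^ 2 * (1 - Real.tanh (s * x) ^ 2)))
      + 1 / 2 * (gaussianPDFReal s 1 x * (x ^ 2 * (1 - Real.tanh (s * x) ^ 2)))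
      ≤ rexp (-s ^ 2 / 2) * (x ^ 2 * gaussianPDFReal 0 1 x) := by
  have hsum := pdf_sum_eq s x
  have hc := Real.cosh_pos (s * x)
  have h1c : 1 ≤ Real.cosh (s * x) := Real.one_le_cosh _
  have hid := one_sub_tanh_sq_mul_cosh_sq (s * x)
  have hfrac : (1 - Real.tanh (s * x) ^ 2) * Real.cosh (s * x) ≤ 1 := by nlinarith
  have lhs_eq : 1 / 2 * (gaussianPDFReal (-s) 1 x * (x ^ 2 * (1 - Real.tanh (s * x) ^ 2)))
      + 1 / 2 * (gaussianPDFReal s 1 x * (x ^ 2 * (1 - Real.tanh (s * x) ^ 2)))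
      = (rexp (-s ^ 2 / 2) * (x ^ 2 * gaussianPDFReal 0 1 x))
        * ((1 - Real.tanh (s * x) ^ 2) * Real.cosh (s * x)) := by
    linear_combination (1 / 2 * (x ^ 2 * (1 - Real.tanh (s * x) ^ 2))) * hsum
  rw [lhs_eq]
  exact mul_le_of_le_one_right
    (mul_nonneg (Real.exp_pos _).le
      (mul_nonneg (sq_nonneg x) (gaussianPDFReal_nonneg 0 1 x))) hfrac

lemma deriv_emMap_le (s : ℝ) : deriv (emMap s) s ≤ Real.exp (-s ^ 2 / 2) := by
  rw [deriv_emMap]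
  have hg1 : Integrable (fun y : ℝ => y ^ 2 * (1 - Real.tanh (s * y) ^ 2))
      (gaussianReal (-s) 1) := integrable_F'_of (integrable_abs_pow_gaussianReal 2 (-s)) s
  have hg2 : Integrable (fun y : ℝ => y ^ 2 * (1 - Real.tanh (s * y) ^ 2))
      (gaussianReal s 1) := integrable_F'_of (integrable_abs_pow_gaussianReal 2 s) s
  rw [integral_mixG hg1 hg2, integral_gaussianReal_eq, integral_gaussianReal_eq]
  have hint1 : Integrable (fun x => gaussianPDFReal (-s) 1 x
      * (x ^ 2 * (1 - Real.tanh (s * x) ^ 2))) volume := integrable_gaussianReal_iff.1 hg1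
  have hint2 : Integrable (fun x => gaussianPDFReal s 1 x
      * (x ^ 2 * (1 - Real.tanh (s * x) ^ 2))) volume := integrable_gaussianReal_iff.1 hg2
  have h1 : Integrable (fun x => 1 / 2 * (gaussianPDFReal (-s) 1 x
      * (x ^ 2 * (1 - Real.tanh (s * x) ^ 2)))) volume := by exact hint1.const_mul _
  have h2 : Integrable (fun x => 1 / 2 * (gaussianPDFReal s 1 x
      * (x ^ 2 * (1 - Real.tanh (s * x) ^ 2)))) volume := by exact hint2.const_mul _
  have hmaj : Integrable (fun x => rexp (-s ^ 2 / 2) * (x ^ 2 * gaussianPDFReal 0 1 x)) volume := by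
    exact (integrable_sq_mul_pdf 0).const_mul _
  rw [← integral_const_mul, ← integral_const_mul]
  calc (∫ x, 1 / 2 * (gaussianPDFReal (-s) 1 x * (x ^ 2 * (1 - Real.tanh (s * x) ^ 2))))
        + ∫ x, 1 / 2 * (gaussianPDFReal s 1 x * (x ^ 2 * (1 - Real.tanh (s * x) ^ 2)))
      = ∫ x, (1 / 2 * (gaussianPDFReal (-s) 1 x * (x ^ 2 * (1 - Real.tanh (s * x) ^ 2)))
        + 1 / 2 * (gaussianPDFReal s 1 x * (x ^ 2 * (1 - Real.tanh (s * x) ^ 2)))) :=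
        (integral_add h1 h2).symm
    _ ≤ ∫ x, rexp (-s ^ 2 / 2) * (x ^ 2 * gaussianPDFReal 0 1 x) := by
        refine integral_mono (by exact h1.add h2) hmaj fun x => ?_
        exact bound_pointwise s x
    _ = rexp (-s ^ 2 / 2) := by
        rw [integral_const_mul, integral_sq_mul_pdf_zero, mul_one]

end StmtAux

open StmtAux in
/-- `f(0) = 0`, `f'(0) = 1 + s²`, `f''(0) = 0`, and `f'(s) ≤ exp(−s²/2)`. -/
theorem stmt_5 (s : ℝ) (hs : 0 ≤ s) :
    emMap s 0 = 0 ∧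
    deriv (emMap s) 0 = 1 + s ^ 2 ∧
    deriv (deriv (emMap s)) 0 = 0 ∧
    deriv (emMap s) s ≤ Real.exp (-s ^ 2 / 2) := by
  refine ⟨?_, ?_, ?_, deriv_emMap_le s⟩
  · simp [emMap, Real.tanh_zero]
  · rw [deriv_emMap]
    have : (fun y : ℝ => y ^ 2 * (1 - Real.tanh (0 * y) ^ 2)) = fun y : ℝ => y ^ 2 := by
      funext y
      simp
    rw [show (∫ y, y ^ 2 * (1 - Real.tanh (0 * y) ^ 2) ∂(mixG s)) = ∫ y, y ^ 2 ∂(mixG s) by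
      congr 1]
    exact integral_sq_mixG s
  · have hd : deriv (emMap s) = fun θ => ∫ y, y ^ 2 * (1 - Real.tanh (θ * y) ^ 2) ∂(mixG s) :=
      funext (deriv_emMap s)
    rw [hd]
    exact (hasDerivAt_G_zero s).deriv
end

section
/- For any σ ≥ 0 and Z ∼ N(0,1), E[1/cosh²(σZ)] ≤ 1 − σ²/(2(1 + 2σ²)). -/
open MeasureTheory ProbabilityTheory Real Set Filter Topology
open scoped NNReal ENNReal

noncomputable def gaussF (u : ℝ) : ℝ := ∫ z, (1 + u * z ^ 2)⁻¹ ∂(gaussianReal 0 1)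

lemma gauss_unfold (g : ℝ → ℝ) :
    ∫ z, g z ∂(gaussianReal 0 1) = ∫ z, gaussianPDFReal 0 1 z * g z := by
  rw [gaussianReal_of_var_ne_zero 0 one_ne_zero]
  have h1 : (gaussianPDF 0 1) = fun x => ((Real.toNNReal (gaussianPDFReal 0 1 x) : ℝ≥0) : ℝ≥0∞) := by
    ext x
    simp [gaussianPDF, ENNReal.ofReal]
  rw [h1, integral_withDensity_eq_integral_smul ((measurable_gaussianPDFReal 0 1).real_toNNReal)]
  refine integral_congr_ae (ae_of_all _ fun z => ?_)
  simp [NNReal.smul_def, Real.coe_toNNReal _ (gaussianPDFReal_nonneg 0 1 z)]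

lemma pdf_eq (z : ℝ) : gaussianPDFReal 0 1 z = (Real.sqrt (2 * π))⁻¹ * Real.exp (-(z ^ 2) / 2) := by
  simp [gaussianPDFReal]

lemma gauss_integrable_of_bound {g : ℝ → ℝ} (hm : AEStronglyMeasurable g (gaussianReal 0 1))
    (C : ℝ) (h : ∀ z, |g z| ≤ C) : Integrable g (gaussianReal 0 1) :=
  (integrable_const C).mono' hm (ae_of_all _ fun z => h z)

lemma pdf_continuous : Continuous (gaussianPDFReal 0 1) := by
  have : (gaussianPDFReal 0 1) = fun z => (Real.sqrt (2 * π))⁻¹ * Real.exp (-(z ^ 2) / 2) :=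
    funext pdf_eq
  rw [this]
  exact continuous_const.mul ((continuous_pow 2).neg.div_const 2).rexp

lemma pdf_hasDerivAt (z : ℝ) :
    HasDerivAt (gaussianPDFReal 0 1) (-z * gaussianPDFReal 0 1 z) z := by
  have h1 : HasDerivAt (fun z : ℝ => -(z ^ 2) / 2) (-z) z := by
    have := ((hasDerivAt_pow 2 z).neg.div_const 2)
    refine this.congr_deriv ?_
    ring
  have h2 := (h1.exp).const_mul (Real.sqrt (2 * π))⁻¹
  have : (gaussianPDFReal 0 1) = fun z => (Real.sqrt (2 * π))⁻¹ * Real.exp (-(z ^ 2) / 2) :=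
    funext pdf_eq
  rw [this]
  refine h2.congr_deriv ?_
  ring

lemma pdf_tendsto_atTop : Tendsto (gaussianPDFReal 0 1) atTop (𝓝 0) := by
  have h0 : Tendsto (fun z : ℝ => z ^ 2) atTop atTop := tendsto_pow_atTop two_ne_zero
  have h1' : Tendsto (fun z : ℝ => -(z ^ 2)) atTop atBot := by
    simpa [Function.comp_def] using tendsto_neg_atTop_atBot.comp h0
  have h1 : Tendsto (fun z : ℝ => -(z ^ 2) / 2) atTop atBot :=
    h1'.atBot_div_const (by norm_num)
  have h2 := (Real.tendsto_exp_atBot.comp h1).const_mul (Real.sqrt (2 * π))⁻¹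
  have he : (gaussianPDFReal 0 1) = fun z => (Real.sqrt (2 * π))⁻¹ * Real.exp (-(z ^ 2) / 2) :=
    funext pdf_eq
  rw [he]
  simpa using h2

lemma pdf_tendsto_atBot : Tendsto (gaussianPDFReal 0 1) atBot (𝓝 0) := by
  have h0 : Tendsto (fun z : ℝ => z ^ 2) atBot atTop := by
    have ha : Tendsto (fun z : ℝ => |z|) atBot atTop := tendsto_abs_atBot_atTop
    have hp : Tendsto (fun z : ℝ => z ^ 2) atTop atTop :=
      tendsto_pow_atTop (n := 2) (by norm_num)
    have := hp.comp ha
    simpa [Function.comp_def, sq_abs] using this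
  have h1' : Tendsto (fun z : ℝ => -(z ^ 2)) atBot atBot := by
    simpa [Function.comp_def] using tendsto_neg_atTop_atBot.comp h0
  have h1 : Tendsto (fun z : ℝ => -(z ^ 2) / 2) atBot atBot :=
    h1'.atBot_div_const (by norm_num)
  have h2 := (Real.tendsto_exp_atBot.comp h1).const_mul (Real.sqrt (2 * π))⁻¹
  have he : (gaussianPDFReal 0 1) = fun z => (Real.sqrt (2 * π))⁻¹ * Real.exp (-(z ^ 2) / 2) :=
    funext pdf_eq
  rw [he]
  simpa using h2

lemma gauss_ode_aux {u : ℝ} (hu : 0 < u) :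
    ∫ z, (-(2 * u ^ 2) * (z ^ 2 / (1 + u * z ^ 2) ^ 2) + (1 + u) * (1 + u * z ^ 2)⁻¹ - 1)
      ∂(gaussianReal 0 1) = 0 := by
  have hden : ∀ z : ℝ, 0 < 1 + u * z ^ 2 := fun z => by positivity
  set ψ : ℝ → ℝ := fun z =>
    -(2 * u ^ 2) * (z ^ 2 / (1 + u * z ^ 2) ^ 2) + (1 + u) * (1 + u * z ^ 2)⁻¹ - 1 with hψ
  set G : ℝ → ℝ := fun z => u * z / (1 + u * z ^ 2) * gaussianPDFReal 0 1 z with hGdef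
  have hcont1 : Continuous fun z : ℝ => 1 + u * z ^ 2 := by continuity
  have hψcont : Continuous ψ := by
    refine ((continuous_const.mul ((continuous_pow 2).div (hcont1.pow 2)
      (fun z => pow_ne_zero 2 (hden z).ne'))).add
      (continuous_const.mul (hcont1.inv₀ fun z => (hden z).ne'))).sub continuous_const
  -- derivative of G
  have hG : ∀ z, HasDerivAt G (gaussianPDFReal 0 1 z * ψ z) z := by
    intro z
    have hq := ((hasDerivAt_id z).const_mul u).div
      (((hasDerivAt_pow 2 z).const_mul u).const_add 1) (hden z).ne'
    have := hq.mul (pdf_hasDerivAt z)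
    refine this.congr_deriv ?_
    have hne : (1 + u * z ^ 2) ≠ 0 := (hden z).ne'
    simp only [hψ, id_eq, pow_one, Pi.div_apply]
    push_cast
    field_simp
    ring
  -- integrability of the integrand against volume
  have hbound : ∀ z, |gaussianPDFReal 0 1 z * ψ z| ≤ (2 + 2 * u) * gaussianPDFReal 0 1 z := by
    intro z
    rw [abs_mul, abs_of_nonneg (gaussianPDFReal_nonneg 0 1 z), mul_comm]
    refine mul_le_mul_of_nonneg_right ?_ (gaussianPDFReal_nonneg 0 1 z)
    have h1 : z ^ 2 / (1 + u * z ^ 2) ^ 2 ≤ 1 / (4 * u) := by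
      rw [div_le_div_iff₀ (by positivity) (by positivity)]
      nlinarith [sq_nonneg (1 - u * z ^ 2), sq_nonneg z]
    have h2 : (0:ℝ) ≤ z ^ 2 / (1 + u * z ^ 2) ^ 2 := by positivity
    have h3 : (1 + u * z ^ 2)⁻¹ ≤ 1 := by
      rw [inv_le_one_iff₀]; right; nlinarith [sq_nonneg z]
    have h4 : (0:ℝ) < (1 + u * z ^ 2)⁻¹ := by positivity
    have h5 : 2 * u ^ 2 * (z ^ 2 / (1 + u * z ^ 2) ^ 2) ≤ u / 2 := by
      have h6 := mul_le_mul_of_nonneg_left h1 (le_of_lt (by positivity : (0:ℝ) < 2 * u ^ 2))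
      have h7 : 2 * u ^ 2 * (1 / (4 * u)) = u / 2 := by field_simp; ring
      linarith
    have h8 : 0 ≤ (1 + u) * (1 + u * z ^ 2)⁻¹ := by positivity
    have h9 : (1 + u) * (1 + u * z ^ 2)⁻¹ ≤ (1 + u) * 1 :=
      mul_le_mul_of_nonneg_left h3 (by positivity)
    have h10 : 0 ≤ 2 * u ^ 2 * (z ^ 2 / (1 + u * z ^ 2) ^ 2) := by positivity
    simp only [hψ]
    rw [abs_le]
    constructor <;> nlinarith
  have hint : Integrable (fun z => gaussianPDFReal 0 1 z * ψ z) := by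
    refine (((integrable_gaussianPDFReal 0 1).const_mul (2 + 2 * u)).mono'
      ((pdf_continuous.mul hψcont).aestronglyMeasurable) (ae_of_all _ fun z => ?_))
    rw [Real.norm_eq_abs]
    exact hbound z
  -- limits of G at ±∞
  have hGbound : ∀ z, ‖G z‖ ≤ ((1 + u) / 2) * gaussianPDFReal 0 1 z := by
    intro z
    rw [hGdef]
    simp only [norm_mul, Real.norm_eq_abs, abs_of_nonneg (gaussianPDFReal_nonneg 0 1 z)]
    refine mul_le_mul_of_nonneg_right ?_ (gaussianPDFReal_nonneg 0 1 z)
    rw [abs_div, abs_of_pos (hden z), div_le_iff₀ (hden z)]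
    have : |u * z| = u * |z| := by rw [abs_mul, abs_of_pos hu]
    rw [this]
    nlinarith [mul_nonneg hu.le (sq_nonneg (|z| - 1)), sq_abs z, abs_nonneg z,
      mul_nonneg (mul_nonneg hu.le hu.le) (sq_nonneg z), sq_nonneg z]
  have hGtop : Tendsto G atTop (𝓝 0) := by
    apply squeeze_zero_norm hGbound
    simpa using pdf_tendsto_atTop.const_mul ((1 + u) / 2)
  have hGbot : Tendsto G atBot (𝓝 0) := by
    apply squeeze_zero_norm hGbound
    simpa using pdf_tendsto_atBot.const_mul ((1 + u) / 2)
  -- FTC on both half-lines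
  have h1 : ∫ z in Iic (0:ℝ), gaussianPDFReal 0 1 z * ψ z = G 0 - 0 :=
    integral_Iic_of_hasDerivAt_of_tendsto (hG 0).continuousAt.continuousWithinAt
      (fun x _ => hG x) hint.integrableOn hGbot
  have h2 : ∫ z in Ioi (0:ℝ), gaussianPDFReal 0 1 z * ψ z = 0 - G 0 :=
    integral_Ioi_of_hasDerivAt_of_tendsto (hG 0).continuousAt.continuousWithinAt
      (fun x _ => hG x) hint.integrableOn hGtop
  rw [gauss_unfold]
  rw [← intervalIntegral.integral_Iic_add_Ioi (b := 0) hint.integrableOn hint.integrableOn, h1, h2]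
  ring

lemma gaussF_bounds {u : ℝ} (hu : 0 ≤ u) : 0 ≤ gaussF u ∧ gaussF u ≤ 1 := by
  have hden : ∀ z : ℝ, (0:ℝ) < 1 + u * z ^ 2 := fun z => by nlinarith [sq_nonneg z]
  have hcont : Continuous fun z : ℝ => (1 + u * z ^ 2)⁻¹ :=
    (by continuity : Continuous fun z : ℝ => 1 + u * z ^ 2).inv₀ fun z => (hden z).ne'
  have hint : Integrable (fun z : ℝ => (1 + u * z ^ 2)⁻¹) (gaussianReal 0 1) := by
    refine gauss_integrable_of_bound hcont.aestronglyMeasurable 1 fun z => ?_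
    rw [abs_of_pos (by positivity)]
    rw [inv_le_one_iff₀]; right; nlinarith [sq_nonneg z]
  constructor
  · exact integral_nonneg fun z => by positivity
  · calc gaussF u ≤ ∫ _, (1:ℝ) ∂(gaussianReal 0 1) := by
          refine integral_mono hint (integrable_const 1) fun z => ?_
          rw [inv_le_one_iff₀]; right; nlinarith [sq_nonneg z]
    _ = 1 := by simp

lemma gaussF_integrable {u : ℝ} (hu : 0 ≤ u) :
    Integrable (fun z : ℝ => (1 + u * z ^ 2)⁻¹) (gaussianReal 0 1) := by
  have hden : ∀ z : ℝ, (0:ℝ) < 1 + u * z ^ 2 := fun z => by nlinarith [sq_nonneg z]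
  have hcont : Continuous fun z : ℝ => (1 + u * z ^ 2)⁻¹ :=
    (by continuity : Continuous fun z : ℝ => 1 + u * z ^ 2).inv₀ fun z => (hden z).ne'
  refine gauss_integrable_of_bound hcont.aestronglyMeasurable 1 fun z => ?_
  rw [abs_of_pos (by positivity)]
  rw [inv_le_one_iff₀]; right; nlinarith [sq_nonneg z]

lemma gaussF_hasDerivAt {u : ℝ} (hu : 0 < u) :
    HasDerivAt gaussF ((1 - (1 + u) * gaussF u) / (2 * u ^ 2)) u := by
  have hden : ∀ x z : ℝ, u / 2 < x → (0:ℝ) < 1 + x * z ^ 2 := fun x z hx => by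
    nlinarith [sq_nonneg z]
  have hball : ∀ x : ℝ, x ∈ Metric.ball u (u / 2) → u / 2 < x := by
    intro x hx
    have h := abs_lt.mp (by simpa [Real.dist_eq] using hx)
    linarith [h.1]
  obtain ⟨hFI, hFD⟩ := hasDerivAt_integral_of_dominated_loc_of_deriv_le
    (μ := gaussianReal 0 1)
    (F := fun x z => (1 + x * z ^ 2)⁻¹) (F' := fun x z => -z ^ 2 / (1 + x * z ^ 2) ^ 2)
    (x₀ := u) (s := Metric.ball u (u / 2)) (bound := fun _ => 1 / (2 * u)) (Metric.ball_mem_nhds u (half_pos hu))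
    (by filter_upwards [Metric.ball_mem_nhds u (half_pos hu)] with x hx
        have hx' := hball x hx
        exact ((by continuity : Continuous fun z : ℝ => 1 + x * z ^ 2).inv₀
          fun z => (hden x z hx').ne').aestronglyMeasurable)
    (gaussF_integrable hu.le)
    (((by continuity : Continuous fun z : ℝ => -z ^ 2).div
      ((by continuity : Continuous fun z : ℝ => 1 + u * z ^ 2).pow 2)
      fun z => pow_ne_zero 2 (hden u z (by linarith)).ne').aestronglyMeasurable)
    (ae_of_all _ fun z x hx => by
      have hx' := hball x hx
      have hpos := hden x z hx'
      have h1 : |(-z ^ 2 / (1 + x * z ^ 2) ^ 2)| = z ^ 2 / (1 + x * z ^ 2) ^ 2 := by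
        rw [abs_div, abs_of_nonpos (neg_nonpos.mpr (sq_nonneg z)),
          abs_of_pos (pow_pos hpos 2), neg_neg]
      rw [Real.norm_eq_abs, h1, div_le_div_iff₀ (pow_pos hpos 2) (by positivity)]
      nlinarith [sq_nonneg (1 - x * z ^ 2),
        mul_nonneg (show (0:ℝ) ≤ 4 * x - 2 * u by linarith) (sq_nonneg z), sq_nonneg z])
    (integrable_const _)
    (ae_of_all _ fun z x hx => by
      have hx' := hball x hx
      have hc : HasDerivAt (fun y : ℝ => 1 + y * z ^ 2) (z ^ 2) x := by
        simpa using ((hasDerivAt_id x).mul_const (z ^ 2)).const_add 1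
      exact hc.inv (hden x z hx').ne')
  -- now identify the derivative using the ODE identity
  have h0 := gauss_ode_aux hu
  have hA : Integrable (fun z : ℝ => z ^ 2 / (1 + u * z ^ 2) ^ 2) (gaussianReal 0 1) :=
    hFI.neg.congr (ae_of_all _ fun z => by simp [neg_div])
  have hB := gaussF_integrable hu.le
  have hA' : Integrable (fun z : ℝ => -(2 * u ^ 2) * (z ^ 2 / (1 + u * z ^ 2) ^ 2))
      (gaussianReal 0 1) := hA.const_mul _
  have hB' : Integrable (fun z : ℝ => (1 + u) * (1 + u * z ^ 2)⁻¹) (gaussianReal 0 1) :=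
    hB.const_mul _
  have hfg : Integrable (fun z : ℝ => -(2 * u ^ 2) * (z ^ 2 / (1 + u * z ^ 2) ^ 2)
      + (1 + u) * (1 + u * z ^ 2)⁻¹) (gaussianReal 0 1) := hA'.add hB'
  rw [integral_sub hfg (integrable_const 1), integral_add hA' hB', integral_const_mul,
    integral_const_mul, integral_const] at h0
  simp only [measure_univ, ENNReal.toReal_one, probReal_univ, smul_eq_mul, one_mul] at h0
  have hFD' : HasDerivAt gaussF (∫ z, -z ^ 2 / (1 + u * z ^ 2) ^ 2 ∂(gaussianReal 0 1)) u := hFD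
  convert hFD' using 1
  have hneg : ∫ z, -z ^ 2 / (1 + u * z ^ 2) ^ 2 ∂(gaussianReal 0 1)
      = -∫ z, z ^ 2 / (1 + u * z ^ 2) ^ 2 ∂(gaussianReal 0 1) := by
    rw [← integral_neg]; congr 1; ext z; ring
  rw [hneg]
  have hgF : gaussF u = ∫ z, (1 + u * z ^ 2)⁻¹ ∂(gaussianReal 0 1) := rfl
  rw [div_eq_iff (by positivity : (2 * u ^ 2 : ℝ) ≠ 0), hgF]
  linear_combination -h0

lemma gaussF_le {u : ℝ} (hu : 0 < u) : gaussF u ≤ 2 / (1 + Real.sqrt (1 + 2 * u)) := by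
  set H : ℝ → ℝ := fun v => Real.sqrt v * Real.exp (-(2 * v)⁻¹) *
    (2 / (1 + Real.sqrt (1 + 2 * v)) - gaussF v) with hHdef
  set HD : ℝ → ℝ := fun v => Real.sqrt v * Real.exp (-(2 * v)⁻¹) *
    (((1 + v) * (2 / (1 + Real.sqrt (1 + 2 * v))) - 1) / (2 * v ^ 2)
      - 2 / (Real.sqrt (1 + 2 * v) * (1 + Real.sqrt (1 + 2 * v)) ^ 2)) with hHDdef
  have hr1 : ∀ v : ℝ, 0 < v → 1 ≤ Real.sqrt (1 + 2 * v) := by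
    intro v hv
    have h := Real.sqrt_le_sqrt (show (1:ℝ) ≤ 1 + 2 * v by linarith)
    rwa [Real.sqrt_one] at h
  -- derivative of H
  have hH : ∀ v : ℝ, 0 < v → HasDerivAt H (HD v) v := by
    intro v hv
    have h12 : (0:ℝ) < 1 + 2 * v := by linarith
    have hrpos : 0 < Real.sqrt (1 + 2 * v) := Real.sqrt_pos.mpr h12
    have hspos : 0 < Real.sqrt v := Real.sqrt_pos.mpr hv
    have hs2 : Real.sqrt v ^ 2 = v := Real.sq_sqrt hv.le
    have hr2 : Real.sqrt (1 + 2 * v) ^ 2 = 1 + 2 * v := Real.sq_sqrt h12.le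
    have hs : HasDerivAt Real.sqrt (1 / (2 * Real.sqrt v)) v := Real.hasDerivAt_sqrt hv.ne'
    have hi : HasDerivAt (fun y : ℝ => -(2 * y)⁻¹) (2 * 1 / (2 * v) ^ 2) v := by
      have h := (((hasDerivAt_id v).const_mul 2).inv (by positivity)).neg
      refine h.congr_deriv ?_
      simp [neg_div]
    have hE := hi.exp
    have hμ : HasDerivAt (fun y : ℝ => Real.sqrt y * Real.exp (-(2 * y)⁻¹))
        (Real.sqrt v * Real.exp (-(2 * v)⁻¹) * ((1 + v) / (2 * v ^ 2))) v := by
      have h := hs.mul hE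
      refine h.congr_deriv ?_
      have h1s : 1 / (2 * Real.sqrt v) = Real.sqrt v / (2 * v) := by
        rw [div_eq_div_iff (by positivity) (by positivity)]
        linarith [hs2]
      rw [h1s]
      field_simp
      linarith [hs2]
    have hlin : HasDerivAt (fun y : ℝ => 1 + 2 * y) 2 v := by
      simpa using ((hasDerivAt_id v).const_mul 2).const_add 1
    have hrd : HasDerivAt (fun y : ℝ => Real.sqrt (1 + 2 * y))
        (1 / (2 * Real.sqrt (1 + 2 * v)) * 2) v :=
      (Real.hasDerivAt_sqrt h12.ne').comp v hlin
    have hdenne : (1 + Real.sqrt (1 + 2 * v)) ≠ 0 := by positivity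
    have hg : HasDerivAt (fun y : ℝ => 2 / (1 + Real.sqrt (1 + 2 * y)))
        ((0 * (1 + Real.sqrt (1 + 2 * v)) - 2 * (1 / (2 * Real.sqrt (1 + 2 * v)) * 2))
          / (1 + Real.sqrt (1 + 2 * v)) ^ 2) v :=
      (hasDerivAt_const v 2).div (hrd.const_add 1) hdenne
    have hgF := gaussF_hasDerivAt hv
    have hfull := hμ.mul (hg.sub hgF)
    refine hfull.congr_deriv ?_
    rw [hHDdef]
    simp only [Pi.sub_apply]
    field_simp
    ring
  -- nonnegativity of the derivative
  have hHD : ∀ v : ℝ, 0 < v → 0 ≤ HD v := by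
    intro v hv
    have h12 : (0:ℝ) < 1 + 2 * v := by linarith
    have hrpos : 0 < Real.sqrt (1 + 2 * v) := Real.sqrt_pos.mpr h12
    have hr2 : Real.sqrt (1 + 2 * v) ^ 2 = 1 + 2 * v := Real.sq_sqrt h12.le
    have hr1' := hr1 v hv
    rw [hHDdef]
    refine mul_nonneg (by positivity) ?_
    rw [sub_nonneg, div_le_div_iff₀ (by positivity) (by positivity)]
    set r := Real.sqrt (1 + 2 * v) with hrdef
    have hveq : v = (r ^ 2 - 1) / 2 := by rw [hrdef]; linarith [hr2]
    have h1r : (0:ℝ) < 1 + r := by positivity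
    have key : (1 + v) * (2 / (1 + r)) - 1 = (2 * (1 + v) - (1 + r)) / (1 + r) := by
      field_simp
    rw [key, div_mul_eq_mul_div, le_div_iff₀ h1r, hveq]
    nlinarith [mul_nonneg (sub_nonneg.mpr hr1') (sq_nonneg (1 + r)), sq_nonneg (r - 1),
      mul_nonneg (mul_nonneg (sub_nonneg.mpr hr1') hrpos.le) (sq_nonneg (1 + r))]
  -- monotone on Ioi 0
  have hmono : MonotoneOn H (Ioi (0:ℝ)) := by
    refine monotoneOn_of_deriv_nonneg (convex_Ioi 0)
      (fun v hv => (hH v hv).continuousAt.continuousWithinAt)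
      (fun v hv => (hH v (by simpa using hv)).differentiableAt.differentiableWithinAt)
      (fun v hv => ?_)
    rw [(hH v (by simpa using hv)).deriv]
    exact hHD v (by simpa using hv)
  -- limit at 0+
  have htend : Tendsto H (𝓝[>] (0:ℝ)) (𝓝 0) := by
    have hgt : Tendsto (fun v : ℝ => 2 * Real.sqrt v) (𝓝[>] (0:ℝ)) (𝓝 0) := by
      have h := ((Real.continuous_sqrt.tendsto 0).const_mul 2).mono_left
        (nhdsWithin_le_nhds (s := Ioi (0:ℝ)))
      simpa using h
    refine squeeze_zero_norm' ?_ hgt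
    · filter_upwards [self_mem_nhdsWithin] with v hv
      have hv' : 0 < v := hv
      have hF := gaussF_bounds hv'.le
      have hgle : 2 / (1 + Real.sqrt (1 + 2 * v)) ≤ 1 := by
        rw [div_le_one (by positivity)]
        linarith [hr1 v hv']
      have hgge : (0:ℝ) ≤ 2 / (1 + Real.sqrt (1 + 2 * v)) := by positivity
      have hEle : Real.exp (-(2 * v)⁻¹) ≤ 1 := by
        rw [Real.exp_le_one_iff]
        simp only [neg_nonpos]
        positivity
      rw [hHdef]
      rw [Real.norm_eq_abs, abs_mul, abs_mul, abs_of_nonneg (Real.sqrt_nonneg v),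
        abs_of_pos (Real.exp_pos _)]
      have h1 : |2 / (1 + Real.sqrt (1 + 2 * v)) - gaussF v| ≤ 2 := by
        rw [abs_le]; constructor <;> linarith [hF.1, hF.2]
      calc Real.sqrt v * Real.exp (-(2 * v)⁻¹) * |2 / (1 + Real.sqrt (1 + 2 * v)) - gaussF v|
          ≤ Real.sqrt v * 1 * 2 := by
            apply mul_le_mul (mul_le_mul_of_nonneg_left hEle (Real.sqrt_nonneg v)) h1
              (abs_nonneg _) (by positivity)
        _ = 2 * Real.sqrt v := by ring
  -- conclude
  have hHu : 0 ≤ H u := by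
    refine le_of_tendsto htend ?_
    filter_upwards [Ioo_mem_nhdsGT_of_mem (show (0:ℝ) ∈ Ico 0 u from ⟨le_refl 0, hu⟩)]
      with v hv
    exact hmono hv.1 hu hv.2.le
  have hμpos : 0 < Real.sqrt u * Real.exp (-(2 * u)⁻¹) := by positivity
  rw [hHdef] at hHu
  nlinarith [hHu, hμpos]

/-- For `σ ≥ 0` and `Z ∼ N(0,1)`, `E[1/cosh²(σZ)] ≤ 1 − σ²/(2(1 + 2σ²))`. -/
theorem stmt_12 (σ : ℝ) (hσ : 0 ≤ σ) :
    (∫ z, 1 / Real.cosh (σ * z) ^ 2 ∂(gaussianReal 0 1))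
      ≤ 1 - σ ^ 2 / (2 * (1 + 2 * σ ^ 2)) := by
  rcases eq_or_lt_of_le hσ with h0 | hpos
  · rw [← h0]
    simp only [zero_mul, Real.cosh_zero, one_pow, div_one, zero_pow, ne_eq,
      OfNat.ofNat_ne_zero, not_false_eq_true, zero_div, sub_zero, integral_const,
      measure_univ, ENNReal.toReal_one, smul_eq_mul, one_mul]
    norm_num
  · have hu : 0 < σ ^ 2 := by positivity
    -- pointwise bound 1/cosh(σz)^2 ≤ (1 + σ² z²)⁻¹
    have hpt : ∀ z : ℝ, 1 / Real.cosh (σ * z) ^ 2 ≤ (1 + σ ^ 2 * z ^ 2)⁻¹ := by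
      intro z
      have habs : |σ * z| ≤ |Real.sinh (σ * z)| := by
        rcases le_or_gt 0 (σ * z) with h | h
        · rw [abs_of_nonneg h, abs_of_nonneg (Real.sinh_nonneg_iff.mpr h)]
          exact Real.self_le_sinh_iff.mpr h
        · rw [abs_of_neg h, abs_of_neg (Real.sinh_neg_iff.mpr h)]
          have h2 : -(σ * z) ≤ Real.sinh (-(σ * z)) :=
            Real.self_le_sinh_iff.mpr (by linarith)
          rw [Real.sinh_neg] at h2
          linarith
      have hsq : (σ * z) ^ 2 ≤ Real.sinh (σ * z) ^ 2 := by
        have := pow_le_pow_left₀ (abs_nonneg (σ * z)) habs 2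
        simpa only [sq_abs] using this
      have hcosh : 1 + σ ^ 2 * z ^ 2 ≤ Real.cosh (σ * z) ^ 2 := by
        have := Real.cosh_sq (σ * z)
        nlinarith [hsq]
      rw [one_div]
      exact inv_anti₀ (by positivity) hcosh
    -- integrability of LHS
    have hcoshpos : ∀ z : ℝ, (0:ℝ) < Real.cosh (σ * z) ^ 2 := fun z =>
      pow_pos (Real.cosh_pos _) 2
    have hconts : Continuous fun z : ℝ => 1 / Real.cosh (σ * z) ^ 2 :=
      continuous_const.div ((Real.continuous_cosh.comp (continuous_const.mul continuous_id)).pow 2)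
        fun z => (hcoshpos z).ne'
    have hint1 : Integrable (fun z : ℝ => 1 / Real.cosh (σ * z) ^ 2) (gaussianReal 0 1) := by
      refine gauss_integrable_of_bound hconts.aestronglyMeasurable 1 fun z => ?_
      rw [abs_of_pos (by positivity)]
      rw [div_le_one (hcoshpos z)]
      nlinarith [Real.one_le_cosh (σ * z)]
    have step1 : (∫ z, 1 / Real.cosh (σ * z) ^ 2 ∂(gaussianReal 0 1)) ≤ gaussF (σ ^ 2) :=
      integral_mono hint1 (gaussF_integrable hu.le) hpt
    have step2 := gaussF_le hu
    -- final algebra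
    have h12 : (0:ℝ) < 1 + 2 * σ ^ 2 := by linarith
    set r := Real.sqrt (1 + 2 * σ ^ 2) with hrdef
    have hr2 : r ^ 2 = 1 + 2 * σ ^ 2 := Real.sq_sqrt h12.le
    have hr1 : 1 ≤ r := by
      have h := Real.sqrt_le_sqrt (show (1:ℝ) ≤ 1 + 2 * σ ^ 2 by linarith)
      rwa [Real.sqrt_one] at h
    have h1r : (0:ℝ) < 1 + r := by linarith
    have hσ2 : σ ^ 2 = (r ^ 2 - 1) / 2 := by linarith
    have step3 : 2 / (1 + r) ≤ 1 - σ ^ 2 / (2 * (1 + 2 * σ ^ 2)) := by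
      rw [hσ2, show (2 * (1 + 2 * ((r ^ 2 - 1) / 2))) = 2 * r ^ 2 by ring]
      have e : 1 - ((r ^ 2 - 1) / 2) / (2 * r ^ 2) = (3 * r ^ 2 + 1) / (4 * r ^ 2) := by
        field_simp
        ring
      rw [e, div_le_div_iff₀ h1r (by positivity)]
      nlinarith [mul_nonneg (sq_nonneg (r - 1)) (show (0:ℝ) ≤ 3 * r + 1 by linarith)]
    calc (∫ z, 1 / Real.cosh (σ * z) ^ 2 ∂(gaussianReal 0 1))
        ≤ gaussF (σ ^ 2) := step1
      _ ≤ 2 / (1 + r) := step2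
      _ ≤ 1 - σ ^ 2 / (2 * (1 + 2 * σ ^ 2)) := step3
end

section
/- Let W ∼ N(0,1) independent of V ∼ (1/2)N(−s,1) + (1/2)N(s,1), and define G(α,β) = E[W·tanh(αV + βW)]. Then for all α ∈ ℝ and β ≥ 0, G(α,β) ≤ β·(1 − (α² + β²)/(2 + 4(α² + β²))). -/
open MeasureTheory ProbabilityTheory
open scoped ENNReal

/-- `F(α,β) = E[V·tanh(αV + βW)]` with `V ∼ mixG s` independent of `W ∼ N(0,1)`. -/
noncomputable def Fmap (s α β : ℝ) : ℝ :=
  ∫ p : ℝ × ℝ, p.1 * Real.tanh (α * p.1 + β * p.2)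
    ∂((mixG s).prod (gaussianReal 0 1))

/-- `G(α,β) = E[W·tanh(αV + βW)]` with `V ∼ mixG s` independent of `W ∼ N(0,1)`. -/
noncomputable def Gmap (s α β : ℝ) : ℝ :=
  ∫ p : ℝ × ℝ, p.2 * Real.tanh (α * p.1 + β * p.2)
    ∂((mixG s).prod (gaussianReal 0 1))

section Auxiliary

open Real Filter

/-! ### Pointwise inequalities -/

lemma aux_cosh_ge (x : ℝ) : 1 + x^2/2 ≤ Real.cosh x := by
  obtain ⟨y, rfl⟩ : ∃ y, x = 2*y := ⟨x/2, by ring⟩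
  have h2 : Real.cosh (2 * y) = Real.cosh y^2 + Real.sinh y^2 := Real.cosh_two_mul _
  have h3 : Real.cosh y^2 = Real.sinh y^2 + 1 := Real.cosh_sq _
  have h4 : y^2 ≤ Real.sinh y^2 := by
    have := Real.self_le_sinh_iff.mpr (abs_nonneg y)
    have h5 : |Real.sinh y| = Real.sinh |y| := Real.abs_sinh _
    nlinarith [abs_nonneg y, sq_abs y, sq_abs (Real.sinh y)]
  nlinarith [h2, h3, h4]

lemma aux_tanh_sq_ge (x : ℝ) : 1 - Real.tanh x ^ 2 ≤ 1/2 + Real.exp (-x^2)/2 := by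
  have hc : 0 < Real.cosh x := Real.cosh_pos x
  have ht : Real.tanh x = Real.sinh x / Real.cosh x := Real.tanh_eq_sinh_div_cosh x
  have hid : Real.cosh x ^ 2 - Real.sinh x ^ 2 = 1 := Real.cosh_sq_sub_sinh_sq x
  have h1 : 1 - Real.tanh x ^ 2 = 1 / Real.cosh x ^ 2 := by
    rw [ht]; field_simp; exact hid
  rw [h1]
  have hcosh := aux_cosh_ge x
  have hexp : 1 - x^2 ≤ Real.exp (-x^2) := by
    have := Real.add_one_le_exp (-x^2); linarith
  have hexp0 : 0 < Real.exp (-x^2) := Real.exp_pos _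
  rw [div_le_iff₀ (by positivity)]
  rcases le_or_gt (x^2) 1 with h | h
  · nlinarith [sq_nonneg x, sq_nonneg (x^2)]
  · nlinarith [sq_nonneg x]

lemma aux_hasDerivAt_tanh (y : ℝ) : HasDerivAt Real.tanh (1 - Real.tanh y ^ 2) y := by
  have hc : Real.cosh y ≠ 0 := ne_of_gt (Real.cosh_pos y)
  have h := (Real.hasDerivAt_sinh y).div (Real.hasDerivAt_cosh y) hc
  have he : Real.tanh = fun y => Real.sinh y / Real.cosh y := funext Real.tanh_eq_sinh_div_cosh
  rw [he]
  refine HasDerivAt.congr_deriv h ?_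
  have hid := Real.cosh_sq_sub_sinh_sq y
  beta_reduce
  field_simp

lemma aux_decay (x : ℝ) : |x| * Real.exp (-x^2/2) ≤ 2 * Real.exp (-(1/4) * x^2) := by
  have h : Real.exp (-x^2/2) = Real.exp (-(1/4)*x^2) * Real.exp (-(1/4)*x^2) := by
    rw [← Real.exp_add]; ring_nf
  have h3 : (1/4)*x^2 + 1 ≤ Real.exp ((1/4)*x^2) := Real.add_one_le_exp _
  have h4 : |x| ≤ 2 * Real.exp ((1/4)*x^2) := by
    nlinarith [sq_abs x, sq_nonneg (|x| - 2), abs_nonneg x]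
  have h2 : |x| * Real.exp (-(1/4)*x^2) ≤ 2 := by
    calc |x| * Real.exp (-(1/4)*x^2) ≤ (2 * Real.exp ((1/4)*x^2)) * Real.exp (-(1/4)*x^2) := by
          exact mul_le_mul_of_nonneg_right h4 (Real.exp_nonneg _)
      _ = 2 := by rw [mul_assoc, ← Real.exp_add]; simp
  calc |x| * Real.exp (-x^2/2) = (|x| * Real.exp (-(1/4)*x^2)) * Real.exp (-(1/4)*x^2) := by
        rw [h]; ring
    _ ≤ 2 * Real.exp (-(1/4)*x^2) :=
        mul_le_mul_of_nonneg_right h2 (Real.exp_nonneg _)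

lemma aux_abs_tanh_le_one (x : ℝ) : |Real.tanh x| ≤ 1 := by
  have hc : 0 < Real.cosh x := Real.cosh_pos x
  have hid := Real.cosh_sq_sub_sinh_sq x
  rw [Real.tanh_eq_sinh_div_cosh, abs_div, div_le_one (by positivity)]
  rw [abs_of_pos hc]
  nlinarith [sq_abs (Real.sinh x), abs_nonneg (Real.sinh x)]

lemma aux_tanh_sq_le_one (x : ℝ) : Real.tanh x ^ 2 ≤ 1 := by
  nlinarith [aux_abs_tanh_le_one x, sq_abs (Real.tanh x), abs_nonneg (Real.tanh x)]

@[fun_prop] lemma aux_continuous_tanh : Continuous Real.tanh := by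
  have he : Real.tanh = fun y => Real.sinh y / Real.cosh y := funext Real.tanh_eq_sinh_div_cosh
  rw [he]
  exact Real.continuous_sinh.div Real.continuous_cosh fun x => ne_of_gt (Real.cosh_pos x)

/-! ### Gaussian integrals -/

lemma aux_integral_gaussianReal_eq (f : ℝ → ℝ) :
    ∫ x, f x ∂(gaussianReal 0 1) = ∫ x, gaussianPDFReal 0 1 x * f x := by
  rw [gaussianReal_of_var_ne_zero _ one_ne_zero]
  have hmeas : Measurable fun x => (gaussianPDFReal 0 1 x).toNNReal :=
    (measurable_gaussianPDFReal 0 1).real_toNNReal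
  have h : (volume.withDensity (gaussianPDF 0 1))
      = volume.withDensity (fun x => ((gaussianPDFReal 0 1 x).toNNReal : ℝ≥0∞)) := rfl
  rw [h, integral_withDensity_eq_integral_smul hmeas]
  congr 1; ext x
  simp [NNReal.smul_def, Real.coe_toNNReal _ (gaussianPDFReal_nonneg 0 1 x)]

lemma aux_pdf01 (x : ℝ) :
    gaussianPDFReal 0 1 x = (Real.sqrt (2 * π))⁻¹ * Real.exp (-x^2/2) := by
  simp [gaussianPDFReal]

lemma aux_gaussJ (b c : ℝ) :
    ∫ x, Real.exp (-(c + b*x)^2) ∂(gaussianReal 0 1)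
      = Real.exp (-(c^2/(1+2*b^2))) / Real.sqrt (1+2*b^2) := by
  have hA : (0:ℝ) < 1/2 + b^2 := by positivity
  have hT : (0:ℝ) < 1 + 2*b^2 := by positivity
  rw [aux_integral_gaussianReal_eq]
  have key : ∀ x : ℝ, gaussianPDFReal 0 1 x * Real.exp (-(c + b*x)^2)
      = (Real.sqrt (2 * π))⁻¹ * Real.exp (-(c^2/(1+2*b^2)))
          * Real.exp (-(1/2+b^2) * (x + b*c/(1/2+b^2))^2) := by
    intro x
    rw [aux_pdf01, mul_assoc, ← Real.exp_add, mul_assoc, ← Real.exp_add]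
    congr 1
    congr 1
    have h1 : (1/2+b^2 : ℝ) ≠ 0 := ne_of_gt hA
    have h2 : (1+2*b^2 : ℝ) ≠ 0 := ne_of_gt hT
    field_simp
    ring
  simp_rw [key]
  rw [integral_const_mul,
    integral_add_right_eq_self (fun x => Real.exp (-(1/2+b^2) * x^2)) (b*c/(1/2+b^2)),
    integral_gaussian]
  have hs : Real.sqrt (π / (1/2+b^2)) = Real.sqrt (2*π) / Real.sqrt (1+2*b^2) := by
    rw [show π / (1/2+b^2) = (2*π)/(1+2*b^2) by field_simp,
      Real.sqrt_div (by positivity)]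
  rw [hs]
  have h2π : Real.sqrt (2*π) ≠ 0 := by positivity
  have hTs : Real.sqrt (1+2*b^2) ≠ 0 := by positivity
  field_simp

/-! ### Stein identity -/

lemma aux_stein (c β : ℝ) :
    ∫ w, w * Real.tanh (c + β*w) ∂(gaussianReal 0 1)
      = β * ∫ w, (1 - Real.tanh (c + β*w)^2) ∂(gaussianReal 0 1) := by
  have hK0 : (0:ℝ) < (Real.sqrt (2*π))⁻¹ := by positivity
  set K : ℝ := (Real.sqrt (2*π))⁻¹ with hK
  set g1 : ℝ → ℝ := fun w => K * Real.exp (-w^2/2) * (w * Real.tanh (c + β*w)) with hg1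
  set g2 : ℝ → ℝ := fun w => K * Real.exp (-w^2/2) * (β * (1 - Real.tanh (c + β*w)^2)) with hg2
  set F : ℝ → ℝ := fun w => -(K * Real.exp (-w^2/2) * Real.tanh (c + β*w)) with hF
  have hcont1 : Continuous g1 := by rw [hg1]; fun_prop
  have hcont2 : Continuous g2 := by rw [hg2]; fun_prop
  have hder : ∀ w : ℝ, HasDerivAt F (g1 w - g2 w) w := by
    intro w
    have h1 : HasDerivAt (fun w : ℝ => -w^2/2) (-w) w := by
      have := ((hasDerivAt_pow 2 w).neg).div_const 2
      refine this.congr_deriv ?_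
      simp; ring
    have he : HasDerivAt (fun w : ℝ => Real.exp (-w^2/2)) (Real.exp (-w^2/2) * (-w)) w := h1.exp
    have hin : HasDerivAt (fun w : ℝ => c + β*w) β w := by
      simpa using ((hasDerivAt_id w).const_mul β).const_add c
    have htanh : HasDerivAt (fun w : ℝ => Real.tanh (c + β*w))
        ((1 - Real.tanh (c + β*w)^2) * β) w := (aux_hasDerivAt_tanh _).comp w hin
    have hmul := ((he.const_mul K).mul htanh).neg
    refine hmul.congr_deriv ?_
    simp only [hg1, hg2]
    ring
  have hbd1 : ∀ w : ℝ, ‖g1 w‖ ≤ K * 2 * Real.exp (-(1/4) * w^2) := by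
    intro w
    have h1 : |w * Real.tanh (c + β*w)| ≤ |w| := by
      rw [abs_mul]
      calc |w| * |Real.tanh (c+β*w)| ≤ |w| * 1 :=
            mul_le_mul_of_nonneg_left (aux_abs_tanh_le_one _) (abs_nonneg w)
        _ = |w| := mul_one _
    have h2 : ‖g1 w‖ = K * Real.exp (-w^2/2) * |w * Real.tanh (c + β*w)| := by
      rw [hg1]; simp [abs_mul, abs_of_pos hK0, abs_of_pos (Real.exp_pos _)]
    rw [h2]
    calc K * Real.exp (-w^2/2) * |w * Real.tanh (c + β*w)|
        ≤ K * Real.exp (-w^2/2) * |w| := by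
          apply mul_le_mul_of_nonneg_left h1; positivity
      _ = K * (|w| * Real.exp (-w^2/2)) := by ring
      _ ≤ K * (2 * Real.exp (-(1/4) * w^2)) := mul_le_mul_of_nonneg_left (aux_decay w) (le_of_lt hK0)
      _ = K * 2 * Real.exp (-(1/4) * w^2) := by ring
  have hbd2 : ∀ w : ℝ, ‖g2 w‖ ≤ K * |β| * Real.exp (-(1/2) * w^2) := by
    intro w
    have ht : (0:ℝ) ≤ 1 - Real.tanh (c+β*w)^2 := by nlinarith [aux_tanh_sq_le_one (c+β*w)]
    have ht2 : |1 - Real.tanh (c+β*w)^2| ≤ 1 := by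
      rw [abs_of_nonneg ht]; nlinarith [sq_nonneg (Real.tanh (c+β*w))]
    have h2 : ‖g2 w‖ = K * Real.exp (-w^2/2) * (|β| * |1 - Real.tanh (c + β*w)^2|) := by
      rw [hg2]; simp [abs_mul, abs_of_pos hK0, abs_of_pos (Real.exp_pos _)]
    rw [h2]
    have hrw : -w^2/2 = -(1/2) * w^2 := by ring
    rw [hrw]
    calc K * Real.exp (-(1/2) * w^2) * (|β| * |1 - Real.tanh (c + β*w)^2|)
        ≤ K * Real.exp (-(1/2) * w^2) * (|β| * 1) := by
          apply mul_le_mul_of_nonneg_left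
          · exact mul_le_mul_of_nonneg_left ht2 (abs_nonneg β)
          · positivity
      _ = K * |β| * Real.exp (-(1/2) * w^2) := by ring
  have hint1 : Integrable g1 := by
    apply Integrable.mono' (((integrable_exp_neg_mul_sq (by norm_num : (0:ℝ) < 1/4)).const_mul
      (K * 2)))
    · exact hcont1.aestronglyMeasurable
    · exact ae_of_all _ hbd1
  have hint2 : Integrable g2 := by
    apply Integrable.mono' (((integrable_exp_neg_mul_sq (by norm_num : (0:ℝ) < 1/2)).const_mul
      (K * |β|)))
    · exact hcont2.aestronglyMeasurable
    · exact ae_of_all _ hbd2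
  have hFbd : ∀ w : ℝ, ‖F w‖ ≤ K * Real.exp (-(1/2) * w^2) := by
    intro w
    have h0 : ‖F w‖ = K * Real.exp (-w^2/2) * |Real.tanh (c+β*w)| := by
      rw [hF]; simp [abs_mul, abs_of_pos hK0, abs_of_pos (Real.exp_pos _)]
    rw [h0, show -w^2/2 = -(1/2)*w^2 by ring]
    calc K * Real.exp (-(1/2)*w^2) * |Real.tanh (c+β*w)| ≤ K * Real.exp (-(1/2)*w^2) * 1 := by
          apply mul_le_mul_of_nonneg_left (aux_abs_tanh_le_one _); positivity
      _ = K * Real.exp (-(1/2)*w^2) := mul_one _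
  have hexp_top : Tendsto (fun w : ℝ => K * Real.exp (-(1/2) * w^2)) atTop (nhds 0) := by
    have hsq : Tendsto (fun w : ℝ => w^2) atTop atTop := tendsto_pow_atTop (n := 2) (by norm_num)
    have hneg : Tendsto (fun w : ℝ => -(1/2) * w^2) atTop atBot :=
      Tendsto.const_mul_atTop_of_neg (by norm_num : -(1/2 : ℝ) < 0) hsq
    have := (Real.tendsto_exp_atBot.comp hneg).const_mul K
    simpa using this
  have hexp_bot : Tendsto (fun w : ℝ => K * Real.exp (-(1/2) * w^2)) atBot (nhds 0) := by
    have hsq : Tendsto (fun w : ℝ => w^2) atBot atTop := by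
      have := ((tendsto_pow_atTop (n := 2) (by norm_num)).comp tendsto_abs_atBot_atTop :
        Tendsto (fun w : ℝ => |w| ^ 2) atBot atTop)
      simpa [Function.comp_def, sq_abs] using this
    have hneg : Tendsto (fun w : ℝ => -(1/2) * w^2) atBot atBot :=
      Tendsto.const_mul_atTop_of_neg (by norm_num : -(1/2 : ℝ) < 0) hsq
    have := (Real.tendsto_exp_atBot.comp hneg).const_mul K
    simpa using this
  have hFtop : Tendsto F atTop (nhds 0) := squeeze_zero_norm hFbd hexp_top
  have hFbot : Tendsto F atBot (nhds 0) := squeeze_zero_norm hFbd hexp_bot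
  have hsub : Integrable (fun w => g1 w - g2 w) := hint1.sub hint2
  have hIic := integral_Iic_of_hasDerivAt_of_tendsto' (a := 0)
    (fun x _ => hder x) hsub.integrableOn hFbot
  have hIoi := integral_Ioi_of_hasDerivAt_of_tendsto' (a := 0)
    (fun x _ => hder x) hsub.integrableOn hFtop
  have htot : ∫ w, (g1 w - g2 w) = 0 := by
    rw [← intervalIntegral.integral_Iic_add_Ioi hsub.integrableOn hsub.integrableOn, hIic, hIoi]
    ring
  have heq : ∫ w, g1 w = ∫ w, g2 w := by
    have := integral_sub hint1 hint2
    rw [htot] at this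
    linarith [this.symm]
  rw [aux_integral_gaussianReal_eq, aux_integral_gaussianReal_eq, ← integral_const_mul]
  calc ∫ x, gaussianPDFReal 0 1 x * (x * Real.tanh (c + β*x))
      = ∫ w, g1 w := by congr 1; ext x; rw [aux_pdf01, hg1]
    _ = ∫ w, g2 w := heq
    _ = ∫ x, β * (gaussianPDFReal 0 1 x * (1 - Real.tanh (c + β*x)^2)) := by
        congr 1; ext x; rw [aux_pdf01, hg2]; ring

/-! ### Integrability facts -/

lemma aux_integrable_of_bound {X : Type*} [MeasurableSpace X] (μ : Measure X)
    [IsFiniteMeasure μ] (f : X → ℝ) (hm : AEStronglyMeasurable f μ) (C : ℝ)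
    (h : ∀ x, ‖f x‖ ≤ C) : Integrable f μ :=
  (integrable_const C).mono' hm (ae_of_all _ h)

lemma aux_integrable_abs_gauss : Integrable (fun w : ℝ => |w|) (gaussianReal 0 1) := by
  rw [gaussianReal_of_var_ne_zero _ one_ne_zero]
  have hmeas : Measurable fun x => (gaussianPDFReal 0 1 x).toNNReal :=
    (measurable_gaussianPDFReal 0 1).real_toNNReal
  have h : (volume.withDensity (gaussianPDF 0 1))
      = volume.withDensity (fun x => ((gaussianPDFReal 0 1 x).toNNReal : ℝ≥0∞)) := rfl
  rw [h]
  refine (integrable_withDensity_iff_integrable_smul hmeas).mpr ?_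
  have hfun : (fun x : ℝ => (gaussianPDFReal 0 1 x).toNNReal • |x|)
      = fun x => gaussianPDFReal 0 1 x * |x| := by
    funext x
    simp [NNReal.smul_def, Real.coe_toNNReal _ (gaussianPDFReal_nonneg 0 1 x)]
  rw [hfun]
  have hK0 : (0:ℝ) < (Real.sqrt (2*π))⁻¹ := by positivity
  apply Integrable.mono' ((integrable_exp_neg_mul_sq (by norm_num : (0:ℝ) < 1/4)).const_mul
    ((Real.sqrt (2*π))⁻¹ * 2))
  · exact ((measurable_gaussianPDFReal 0 1).mul measurable_abs).aestronglyMeasurable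
  · refine ae_of_all _ fun x => ?_
    have h1 : ‖gaussianPDFReal 0 1 x * |x|‖ = gaussianPDFReal 0 1 x * |x| := by
      rw [Real.norm_eq_abs, abs_of_nonneg (mul_nonneg (gaussianPDFReal_nonneg 0 1 x) (abs_nonneg x))]
    rw [h1, aux_pdf01]
    calc (Real.sqrt (2*π))⁻¹ * Real.exp (-x^2/2) * |x|
        = (Real.sqrt (2*π))⁻¹ * (|x| * Real.exp (-x^2/2)) := by ring
      _ ≤ (Real.sqrt (2*π))⁻¹ * (2 * Real.exp (-(1/4) * x^2)) :=
          mul_le_mul_of_nonneg_left (aux_decay x) (le_of_lt hK0)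
      _ = (Real.sqrt (2*π))⁻¹ * 2 * Real.exp (-(1/4) * x^2) := by ring

instance aux_mixG_prob (s : ℝ) : IsProbabilityMeasure (mixG s) := by
  constructor
  rw [mixG]
  simp only [Measure.coe_add, Pi.add_apply, Measure.smul_apply, smul_eq_mul, measure_univ,
    mul_one]
  exact ENNReal.add_halves 1

/-! ### Mixture Gaussian exponential moment bound -/

lemma aux_gaussJ' (a m : ℝ) (ha : 0 ≤ a) :
    ∫ v, Real.exp (-(a * v^2)) ∂(gaussianReal m 1) ≤ 1 / Real.sqrt (1+2*a) := by
  have hmap : gaussianReal m 1 = (gaussianReal 0 1).map (· + m) := by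
    rw [gaussianReal_map_add_const]; norm_num
  rw [hmap, integral_map (measurable_add_const m).aemeasurable
    (Continuous.aestronglyMeasurable (by fun_prop))]
  have hb : ∀ x : ℝ, -(a * (x+m)^2) = -((Real.sqrt a * m + Real.sqrt a * x)^2) := by
    intro x
    have h := Real.sq_sqrt ha
    linear_combination ((m+x)^2) * h
  simp_rw [hb]
  rw [aux_gaussJ (Real.sqrt a) (Real.sqrt a * m)]
  have hsq : Real.sqrt a ^ 2 = a := Real.sq_sqrt ha
  rw [hsq]
  have hs : (0:ℝ) < Real.sqrt (1+2*a) := by positivity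
  gcongr
  rw [Real.exp_le_one_iff]
  have h0 : 0 ≤ (Real.sqrt a * m)^2 / (1+2*a) := by positivity
  linarith

end Auxiliary

/-- `G(α,β) ≤ β·(1 − (α² + β²)/(2 + 4(α² + β²)))` for all `α` and `β ≥ 0`. -/
theorem stmt_13 (s α β : ℝ) (hβ : 0 ≤ β) :
    Gmap s α β ≤ β * (1 - (α ^ 2 + β ^ 2) / (2 + 4 * (α ^ 2 + β ^ 2))) := by
  have hβ2 : (0:ℝ) < 1 + 2*β^2 := by positivity
  set a : ℝ := α^2/(1+2*β^2) with ha_def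
  have ha : 0 ≤ a := by positivity
  set T : ℝ := Real.sqrt (1+2*(α^2+β^2)) with hT_def
  have hTpos : 0 < T := by rw [hT_def]; positivity
  have hT2 : T^2 = 1+2*(α^2+β^2) := Real.sq_sqrt (by positivity)
  have hT1 : 1 ≤ T := by nlinarith [sq_nonneg α, sq_nonneg β]
  have hsγ : (0:ℝ) < Real.sqrt (1+2*β^2) := by positivity
  have hsa : (0:ℝ) < Real.sqrt (1+2*a) := by positivity
  have hprod : Real.sqrt (1+2*β^2) * Real.sqrt (1+2*a) = T := by
    rw [← Real.sqrt_mul (by positivity), hT_def]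
    congr 1
    rw [ha_def]
    field_simp
    ring
  have hmap : Measure.map Prod.snd ((mixG s).prod (gaussianReal 0 1)) = gaussianReal 0 1 := by
    rw [Measure.map_snd_prod, measure_univ, one_smul]
  have habs : Integrable (fun p : ℝ×ℝ => |p.2|) ((mixG s).prod (gaussianReal 0 1)) := by
    refine (integrable_map_measure (f := Prod.snd) (g := fun x : ℝ => |x|) ?_
      measurable_snd.aemeasurable).mp ?_
    · rw [hmap]; exact continuous_abs.aestronglyMeasurable
    · rw [hmap]; exact aux_integrable_abs_gauss
  have hint : Integrable (fun p : ℝ×ℝ => p.2 * Real.tanh (α*p.1+β*p.2))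
      ((mixG s).prod (gaussianReal 0 1)) := by
    apply habs.mono' (Continuous.aestronglyMeasurable (by fun_prop))
    refine ae_of_all _ fun p => ?_
    rw [norm_mul, Real.norm_eq_abs, Real.norm_eq_abs]
    calc |p.2| * |Real.tanh (α*p.1+β*p.2)| ≤ |p.2| * 1 :=
          mul_le_mul_of_nonneg_left (aux_abs_tanh_le_one _) (abs_nonneg _)
      _ = |p.2| := mul_one _
  have hGmap : Gmap s α β
      = ∫ v, ∫ w, w * Real.tanh (α*v + β*w) ∂(gaussianReal 0 1) ∂(mixG s) := by
    rw [Gmap, integral_prod _ hint]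
  have hInner : Integrable (fun v => ∫ w, w * Real.tanh (α*v + β*w) ∂(gaussianReal 0 1))
      (mixG s) := hint.integral_prod_left
  set h : ℝ → ℝ := fun v =>
    β * (1/2 + Real.exp (-(a*v^2)) / Real.sqrt (1+2*β^2) / 2) with hh_def
  have hpoint : ∀ v : ℝ, ∫ w, w * Real.tanh (α*v + β*w) ∂(gaussianReal 0 1) ≤ h v := by
    intro v
    rw [aux_stein (α*v) β]
    have hi1 : Integrable (fun w => 1 - Real.tanh (α*v+β*w)^2) (gaussianReal 0 1) := by
      apply aux_integrable_of_bound _ _ (Continuous.aestronglyMeasurable (by fun_prop)) 1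
      intro w
      have h1 := aux_tanh_sq_le_one (α*v+β*w)
      have h2 := sq_nonneg (Real.tanh (α*v+β*w))
      rw [Real.norm_eq_abs, abs_of_nonneg (by linarith)]
      linarith
    have hi3 : Integrable (fun w => Real.exp (-(α*v+β*w)^2)) (gaussianReal 0 1) := by
      apply aux_integrable_of_bound _ _ (Continuous.aestronglyMeasurable (by fun_prop)) 1
      intro w
      rw [Real.norm_eq_abs, abs_of_pos (Real.exp_pos _), Real.exp_le_one_iff]
      nlinarith [sq_nonneg (α*v+β*w)]
    have hi2 : Integrable (fun w => 1/2 + Real.exp (-(α*v+β*w)^2)/2) (gaussianReal 0 1) :=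
      (integrable_const (1/2 : ℝ)).add (hi3.div_const 2)
    have hmono := integral_mono hi1 hi2 (fun w => aux_tanh_sq_ge (α*v+β*w))
    have hcalc : ∫ w, (1/2 + Real.exp (-(α*v+β*w)^2)/2) ∂(gaussianReal 0 1)
        = 1/2 + Real.exp (-(a*v^2)) / Real.sqrt (1+2*β^2) / 2 := by
      rw [integral_add (integrable_const _) (hi3.div_const 2), integral_const]
      rw [probReal_univ, one_smul, integral_div, aux_gaussJ β (α*v)]
      have harg : -((α*v)^2/(1+2*β^2)) = -(a*v^2) := by rw [ha_def]; ring
      rw [harg]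
    rw [hh_def]
    apply mul_le_mul_of_nonneg_left _ hβ
    rw [← hcalc]
    exact hmono
  have hHint : Integrable h (mixG s) := by
    apply aux_integrable_of_bound _ _ (Continuous.aestronglyMeasurable (by fun_prop)) (β * 1)
    intro v
    have he1 : Real.exp (-(a*v^2)) ≤ 1 := by
      rw [Real.exp_le_one_iff]; nlinarith [sq_nonneg v]
    have he0 : 0 < Real.exp (-(a*v^2)) := Real.exp_pos _
    have hs1 : 1 ≤ Real.sqrt (1+2*β^2) := by
      nlinarith [Real.sq_sqrt hβ2.le, Real.sqrt_nonneg (1+2*β^2),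
        sq_nonneg (Real.sqrt (1+2*β^2) - 1), sq_nonneg β]
    have hmid : 0 ≤ 1/2 + Real.exp (-(a*v^2)) / Real.sqrt (1+2*β^2) / 2 := by positivity
    have hmid2 : 1/2 + Real.exp (-(a*v^2)) / Real.sqrt (1+2*β^2) / 2 ≤ 1 := by
      have hd : Real.exp (-(a*v^2)) / Real.sqrt (1+2*β^2) ≤ 1 := by
        rw [div_le_one hsγ]; linarith
      linarith
    rw [hh_def, Real.norm_eq_abs, abs_of_nonneg (mul_nonneg hβ hmid)]
    exact mul_le_mul_of_nonneg_left hmid2 hβ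
  have hexpγ : ∀ m : ℝ, Integrable (fun v => Real.exp (-(a*v^2))) (gaussianReal m 1) := by
    intro m
    apply aux_integrable_of_bound _ _ (Continuous.aestronglyMeasurable (by fun_prop)) 1
    intro v
    rw [Real.norm_eq_abs, abs_of_pos (Real.exp_pos _), Real.exp_le_one_iff]
    nlinarith [sq_nonneg v]
  have hmixJ : ∫ v, Real.exp (-(a*v^2)) ∂(mixG s) ≤ 1 / Real.sqrt (1+2*a) := by
    have hg1 : Integrable (fun v => Real.exp (-(a*v^2))) ((1/2 : ℝ≥0∞) • gaussianReal (-s) 1) :=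
      (hexpγ (-s)).smul_measure (by norm_num)
    have hg2 : Integrable (fun v => Real.exp (-(a*v^2))) ((1/2 : ℝ≥0∞) • gaussianReal s 1) :=
      (hexpγ s).smul_measure (by norm_num)
    rw [mixG, integral_add_measure hg1 hg2, integral_smul_measure, integral_smul_measure]
    have ht : (1/2 : ℝ≥0∞).toReal = 1/2 := by norm_num
    rw [ht, smul_eq_mul, smul_eq_mul]
    have b1 := aux_gaussJ' a (-s) ha
    have b2 := aux_gaussJ' a s ha
    linarith
  have hexpmix : Integrable (fun v => Real.exp (-(a*v^2))) (mixG s) := by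
    rw [mixG]
    exact ((hexpγ (-s)).smul_measure (by norm_num)).add_measure
      ((hexpγ s).smul_measure (by norm_num))
  have hIH : ∫ v, h v ∂(mixG s)
      = β * (1/2 + (∫ v, Real.exp (-(a*v^2)) ∂(mixG s)) / Real.sqrt (1+2*β^2) / 2) := by
    rw [hh_def]
    rw [integral_const_mul]
    congr 1
    have hadd := integral_add (μ := mixG s) (integrable_const (1/2 : ℝ))
      (hexpmix.div_const (Real.sqrt (1+2*β^2)) |>.div_const 2)
    rw [hadd, integral_const, probReal_univ, one_smul,
      integral_div, integral_div]
  have hstep1 : Gmap s α β ≤ ∫ v, h v ∂(mixG s) := by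
    rw [hGmap]
    exact integral_mono hInner hHint hpoint
  have hstep2 : ∫ v, h v ∂(mixG s) ≤ β * (1/2 + 1/(2*T)) := by
    rw [hIH]
    apply mul_le_mul_of_nonneg_left _ hβ
    have hd : (∫ v, Real.exp (-(a*v^2)) ∂(mixG s)) / Real.sqrt (1+2*β^2) / 2
        ≤ (1 / Real.sqrt (1+2*a)) / Real.sqrt (1+2*β^2) / 2 := by
      gcongr
    have he : (1 / Real.sqrt (1+2*a)) / Real.sqrt (1+2*β^2) / 2 = 1/(2*T) := by
      rw [← hprod]
      field_simp
    linarith [hd, he.symm.le, he.le]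
  have hkey : 1/2 + 1/(2*T) ≤ 1 - (α^2+β^2)/(2+4*(α^2+β^2)) := by
    have hσ : α^2+β^2 = (T^2-1)/2 := by rw [hT2]; ring
    have hden : 2+4*(α^2+β^2) = 2*T^2 := by rw [hT2]; ring
    have hTne : T ≠ 0 := ne_of_gt hTpos
    have hid : 1 - ((T^2-1)/2)/(2*T^2) - (1/2 + 1/(2*T)) = (T-1)^2/(4*T^2) := by
      field_simp
      ring
    have hpos : 0 ≤ (T-1)^2/(4*T^2) := by positivity
    rw [hden, hσ]
    linarith [hid]
  calc Gmap s α β ≤ β * (1/2 + 1/(2*T)) := hstep1.trans hstep2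
    _ ≤ β * (1 - (α^2+β^2)/(2+4*(α^2+β^2))) := mul_le_mul_of_nonneg_left hkey hβ
end

section
/- Let h: ℝ₊ → ℝ₊ be continuous, increasing, h(0) = 0, and h(x) < x for all x ∈ (0, x₀). Suppose x_{t+1} ≤ x_t − h(x_t) with 0 < x₀. Then {x_t} is a nonincreasing sequence of nonnegative reals converging to 0, and x_t ≤ G⁻¹(t) for t ≥ 1, where G(x) = ∫_x^{x₀} dτ/h(τ). -/
/-- Convergence-rate lemma: if `h : ℝ₊ → ℝ₊` is continuous, increasing, `h(0) = 0`,
`h(x) < x` on `(0, x₀)`, and `x_{t+1} ≤ x_t − h(x_t)` with `x_0 = x₀ > 0`, then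
`{x_t}` is a nonincreasing sequence of nonnegative reals converging to `0`, and
`x_t ≤ G⁻¹(t)` for `t ≥ 1` (i.e. `x_t = 0` or `G(x_t) ≥ t`), where
`G(x) = ∫_x^{x₀} dτ/h(τ)`. -/
theorem stmt_19 (x₀ : ℝ) (hx₀ : 0 < x₀) (h : ℝ → ℝ)
    (hcont : ContinuousOn h (Set.Ici 0))
    (hmono : StrictMonoOn h (Set.Ici 0))
    (h0 : h 0 = 0)
    (hlt : ∀ z ∈ Set.Ioo (0 : ℝ) x₀, h z < z)
    (x : ℕ → ℝ) (hxnn : ∀ t, 0 ≤ x t) (hx0 : x 0 = x₀)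
    (hrec : ∀ t, x (t + 1) ≤ x t - h (x t)) :
    Antitone x ∧ Filter.Tendsto x Filter.atTop (nhds 0) ∧
    ∀ t : ℕ, 1 ≤ t → x t = 0 ∨ (t : ℝ) ≤ ∫ τ in (x t)..x₀, 1 / h τ := by
  have hpos : ∀ z : ℝ, 0 < z → 0 < h z := by
    intro z hz
    have := hmono (Set.self_mem_Ici) (le_of_lt hz) hz
    rwa [h0] at this
  have hnn : ∀ z : ℝ, 0 ≤ z → 0 ≤ h z := by
    intro z hz
    rcases hz.eq_or_lt with rfl | hz'
    · rw [h0]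
    · exact (hpos z hz').le
  have hanti : Antitone x := by
    apply antitone_nat_of_succ_le
    intro n
    have := hrec n
    have := hnn (x n) (hxnn n)
    linarith
  refine ⟨hanti, ?_, ?_⟩
  · -- convergence to 0
    have hbdd : BddBelow (Set.range x) := ⟨0, by rintro y ⟨t, rfl⟩; exact hxnn t⟩
    have hL : Filter.Tendsto x Filter.atTop (nhds (⨅ t, x t)) :=
      tendsto_atTop_ciInf hanti hbdd
    set L := ⨅ t, x t with hLdef
    have hL0 : 0 ≤ L := le_ciInf hxnn
    have hcw : Filter.Tendsto (fun t => h (x t)) Filter.atTop (nhds (h L)) := by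
      have hc : Filter.Tendsto h (nhdsWithin L (Set.Ici 0)) (nhds (h L)) := hcont L hL0
      exact hc.comp (tendsto_nhdsWithin_iff.mpr ⟨hL, Filter.Eventually.of_forall hxnn⟩)
    have hle : L ≤ L - h L := by
      refine le_of_tendsto_of_tendsto' (hL.comp (Filter.tendsto_add_atTop_nat 1))
        (hL.sub hcw) (fun t => hrec t)
    have hhL : h L ≤ 0 := by linarith
    have : L = 0 := by
      rcases hL0.eq_or_lt with heq | hL'
      · exact heq.symm
      · exact absurd (hpos L hL') (not_lt.mpr hhL)
    rwa [this] at hL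
  · -- rate bound
    have hint : ∀ a b : ℝ, 0 < a → a ≤ b →
        IntervalIntegrable (fun τ => 1 / h τ) MeasureTheory.volume a b := by
      intro a b ha hab
      apply ContinuousOn.intervalIntegrable
      rw [Set.uIcc_of_le hab]
      apply ContinuousOn.div continuousOn_const
      · exact hcont.mono (fun z hz => le_trans ha.le hz.1)
      · intro z hz
        exact (hpos z (lt_of_lt_of_le ha hz.1)).ne'
    have hstep : ∀ a b : ℝ, 0 < a → 0 ≤ b → a ≤ b - h b → 1 ≤ ∫ τ in a..b, 1 / h τ := by
      intro a b ha hb hab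
      have hhb : 0 ≤ h b := hnn b hb
      have hab' : a ≤ b := by linarith
      have hbpos : 0 < b := lt_of_lt_of_le ha hab'
      have hhbpos : 0 < h b := hpos b hbpos
      have hmono' : ∀ τ ∈ Set.Icc a b, 1 / h b ≤ 1 / h τ := by
        intro τ hτ
        have hτpos : 0 < h τ := hpos τ (lt_of_lt_of_le ha hτ.1)
        exact one_div_le_one_div_of_le hτpos
          (hmono.monotoneOn (le_trans ha.le hτ.1) hbpos.le hτ.2)
      calc (1 : ℝ) ≤ (b - a) / h b := by
            rw [le_div_iff₀ hhbpos]; linarith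
        _ = ∫ _ in a..b, 1 / h b := by
            rw [intervalIntegral.integral_const, smul_eq_mul]; ring
        _ ≤ ∫ τ in a..b, 1 / h τ :=
            intervalIntegral.integral_mono_on hab' intervalIntegrable_const
              (hint a b ha hab') hmono'
    have key : ∀ t : ℕ, 0 < x t → (t : ℝ) ≤ ∫ τ in (x t)..x₀, 1 / h τ := by
      intro t
      induction t with
      | zero =>
        intro _
        rw [hx0, intervalIntegral.integral_same]
        simp
      | succ n ih =>
        intro hp
        have hxn : 0 < x n := lt_of_lt_of_le hp (hanti (Nat.le_succ n))
        have hxnle : x (n + 1) ≤ x n := hanti (Nat.le_succ n)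
        have hxnx0 : x n ≤ x₀ := hx0 ▸ hanti (Nat.zero_le n)
        have h1 : 1 ≤ ∫ τ in (x (n + 1))..(x n), 1 / h τ :=
          hstep _ _ hp (hxnn n) (hrec n)
        have hsplit : (∫ τ in (x (n + 1))..(x n), 1 / h τ) +
            (∫ τ in (x n)..x₀, 1 / h τ) = ∫ τ in (x (n + 1))..x₀, 1 / h τ :=
          intervalIntegral.integral_add_adjacent_intervals
            (hint _ _ hp hxnle) (hint _ _ hxn hxnx0)
        have := ih hxn
        push_cast
        linarith
    intro t _
    rcases (hxnn t).eq_or_lt with heq | hlt'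
    · exact Or.inl heq.symm
    · exact Or.inr (key t hlt')
end
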